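/- arXiv:2602.08347 — 9 statements merged into one kernel-verified Lean document; each statement's English description precedes it below -/
import Mathlib

section
/- Let d ∈ [0,1) and α > 0. Define p_k = ((1−d)/α)·∏_{j=1}^{k} (α+(j−1)d)/(α+(j−1)d+1) for k = 1,2,…. Then ∑_{k=1}^{∞} p_k = 1; that is, the sequence (p_k)_{k≥1} has sum 1. -/
open Finset Filter Topology

/-- The marginal Pitman–Yor probability mass function sums to one. -/
theorem mpy_hasSum_one (d α : ℝ) (hd0 : 0 ≤ d) (hd1 : d < 1) (hα : 0 < α) :
    HasSum
      (fun k : ℕ =>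
        ((1 - d) / α) *
          ∏ j ∈ Finset.range (k + 1), (α + (j : ℝ) * d) / (α + (j : ℝ) * d + 1))
      1 := by
  have h1d : (0:ℝ) < 1 - d := by linarith
  have hpos : ∀ j : ℕ, (0:ℝ) < α + j * d := fun j => by positivity
  have hpos1 : ∀ j : ℕ, (0:ℝ) < α + j * d + 1 := fun j => by positivity
  set Q : ℕ → ℝ := fun k => ∏ j ∈ Finset.range k, (α + (j : ℝ) * d) / (α + (j : ℝ) * d + 1)
    with hQ
  have hQpos : ∀ k, 0 < Q k := fun k => Finset.prod_pos fun j _ => div_pos (hpos j) (hpos1 j)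
  set f : ℕ → ℝ := fun k => (α + k * d) / (1 - d) * Q k with hf
  have hfpos : ∀ k, 0 < f k := fun k => mul_pos (div_pos (hpos k) h1d) (hQpos k)
  have hQstep : ∀ k : ℕ, Q (k+1) = f k * (1 - d) / (α + k * d + 1) := by
    intro k
    have hQsucc : Q (k+1) = Q k * ((α + (k:ℝ)*d)/(α + (k:ℝ)*d + 1)) :=
      Finset.prod_range_succ _ _
    rw [hQsucc, hf]
    field_simp
  have key : ∀ k : ℕ, Q (k+1) = f k - f (k+1) := by
    intro k
    have hQsucc : Q (k+1) = Q k * ((α + (k:ℝ)*d)/(α + (k:ℝ)*d + 1)) :=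
      Finset.prod_range_succ _ _
    simp only [hf]
    rw [hQsucc]
    push_cast
    field_simp
    ring
  have hanti : Antitone f := antitone_nat_of_succ_le fun k => by
    linarith [key k, hQpos (k+1)]
  have hsum : ∀ n : ℕ, ∑ k ∈ Finset.range n, Q (k+1) = f 0 - f n := by
    intro n
    calc ∑ k ∈ Finset.range n, Q (k+1) = ∑ k ∈ Finset.range n, (f k - f (k+1)) :=
          Finset.sum_congr rfl fun k _ => key k
      _ = f 0 - f n := Finset.sum_range_sub' f n
  have hbdd : BddBelow (Set.range f) := ⟨0, by rintro x ⟨k, rfl⟩; exact (hfpos k).le⟩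
  set L : ℝ := ⨅ k, f k with hL
  have htendL : Tendsto f atTop (𝓝 L) := tendsto_atTop_ciInf hanti hbdd
  have hL0 : 0 ≤ L := le_ciInf fun k => (hfpos k).le
  have hQsummable : Summable (fun k => Q (k+1)) := by
    apply summable_of_sum_range_le (c := f 0) (fun k => (hQpos (k+1)).le)
    intro n
    rw [hsum n]
    linarith [hfpos n]
  have hLzero : L = 0 := by
    by_contra h
    have hLpos : 0 < L := lt_of_le_of_ne hL0 (Ne.symm h)
    have hfL : ∀ k, L ≤ f k := fun k => ciInf_le hbdd k
    have hcomp : Summable (fun k : ℕ => L * (1 - d) / (α + k * d + 1)) := by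
      apply Summable.of_nonneg_of_le (fun k => by positivity)
        (fun k => by rw [hQstep k]; gcongr; exact hfL k) hQsummable
    have hinv : Summable (fun k : ℕ => 1 / (α + k * d + 1)) := by
      have := hcomp.mul_left (L * (1 - d))⁻¹
      have hne : L * (1 - d) ≠ 0 := by positivity
      convert this using 2 with k
      rfl
      field_simp
    have hcomp2 : Summable (fun k : ℕ => (1/(α + d + 1)) * (1 / ((k:ℝ) + 1))) := by
      apply Summable.of_nonneg_of_le (fun k => by positivity) _ hinv
      intro k
      rw [div_mul_div_comm, one_mul]
      apply one_div_le_one_div_of_le (hpos1 k)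
      have : (0:ℝ) ≤ (k:ℝ) := Nat.cast_nonneg k
      nlinarith
    have hharm : Summable (fun k : ℕ => 1 / ((k:ℝ) + 1)) := by
      have := hcomp2.mul_left (α + d + 1)
      have hne : α + d + 1 ≠ 0 := by positivity
      convert this using 2 with k
      rfl
      field_simp
    have : Summable (fun k : ℕ => 1 / (k:ℝ)) := by
      rw [← summable_nat_add_iff 1]
      convert hharm using 2 with k
      rfl
      push_cast
      ring
    exact Real.not_summable_one_div_natCast this
  rw [hLzero] at htendL
  -- final: partial sums tend to 1
  have hnonneg : ∀ k : ℕ, 0 ≤ ((1 - d) / α) * Q (k+1) :=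
    fun k => mul_nonneg (by positivity) (hQpos (k+1)).le
  rw [hasSum_iff_tendsto_nat_of_nonneg hnonneg]
  have heq : ∀ n : ℕ, ∑ k ∈ Finset.range n, ((1 - d) / α) * Q (k+1)
      = 1 - ((1 - d) / α) * f n := by
    intro n
    rw [← Finset.mul_sum, hsum n]
    have hf0 : f 0 = α / (1 - d) := by
      simp [hf, hQ]
    rw [hf0]
    field_simp
  simp only [heq]
  have : Tendsto (fun n => 1 - ((1 - d) / α) * f n) atTop (𝓝 (1 - ((1 - d) / α) * 0)) :=
    tendsto_const_nhds.sub (htendL.const_mul _)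
  simpa using this
end

section
/- Let d ∈ (0,1) and α > 0. Set c = (1−d)·Γ((α+1)/d)/(α·Γ(α/d)) and g(k) = Γ(α/d + k)/Γ((α+1)/d + k) for k = 1,2,…, and let H = −∑_{k=1}^{∞} p_k log p_k, where p_k = c·g(k) is the marginal Pitman–Yor pmf. Then, as n → ∞ along the natural numbers, the sequence H − [ −log c − c·∑_{k=1}^{n} g(k)·log g(k) + c·( (n+1)^{(d−1)/d}/(1−d) · log(n+1) + d·(n+1)^{(d−1)/d}/(d−1)^2 ) ] is O(n^{−1/d} · log n). -/
open Filter Real Set Topology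


/-- Two-sided bound on a ratio of Gamma values, from log-convexity. -/
lemma gamma_ratio_bounds {y e : ℝ} (he : 0 < e) (hy : 1 < y) :
    (y + e) ^ (-e) ≤ Real.Gamma y / Real.Gamma (y + e) ∧
      Real.Gamma y / Real.Gamma (y + e) ≤ (y - 1) ^ (-e) := by
  have hy0 : 0 < y := lt_trans one_pos hy
  have hy1 : 0 < y - 1 := by linarith
  have hye : 0 < y + e := by linarith
  have hG : 0 < Real.Gamma y := Real.Gamma_pos_of_pos hy0
  have hGe : 0 < Real.Gamma (y + e) := Real.Gamma_pos_of_pos hye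
  have hGm : 0 < Real.Gamma (y - 1) := Real.Gamma_pos_of_pos hy1
  have hconv := Real.convexOn_log_Gamma
  have h1 := hconv.slope_mono_adjacent (x := y - 1) (y := y) (z := y + e)
    (mem_Ioi.2 hy1) (mem_Ioi.2 hye) (by linarith) (by linarith)
  have h2 := hconv.slope_mono_adjacent (x := y) (y := y + e) (z := y + e + 1)
    (mem_Ioi.2 hy0) (mem_Ioi.2 (by linarith)) (by linarith) (by linarith)
  simp only [Function.comp] at h1 h2
  have hlogy : Real.log (Real.Gamma y) = Real.log (y - 1) + Real.log (Real.Gamma (y - 1)) := by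
    have := Real.Gamma_add_one (s := y - 1) (by positivity)
    simp only [sub_add_cancel] at this
    rw [this, Real.log_mul (by positivity) (by positivity)]
  have hloge : Real.log (Real.Gamma (y + e + 1))
      = Real.log (y + e) + Real.log (Real.Gamma (y + e)) := by
    rw [Real.Gamma_add_one (s := y + e) (by positivity),
      Real.log_mul (by positivity) (by positivity)]
  rw [hlogy] at h1 h2
  rw [hloge] at h2
  have hs1 : y - (y - 1) = 1 := by ring
  have hs2 : y + e - y = e := by ring
  have hs3 : y + e + 1 - (y + e) = 1 := by ring
  rw [hs1, hs2, div_le_div_iff₀ one_pos he] at h1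
  rw [hs2, hs3, div_le_div_iff₀ he one_pos] at h2
  have key : 0 < Real.Gamma y / Real.Gamma (y + e) := by positivity
  constructor
  · rw [Real.rpow_def_of_pos hye, ← Real.exp_log key,
      Real.log_div (ne_of_gt hG) (ne_of_gt hGe), hlogy]
    exact Real.exp_le_exp.2 (by nlinarith)
  · rw [Real.rpow_def_of_pos hy1, ← Real.exp_log key,
      Real.log_div (ne_of_gt hG) (ne_of_gt hGe), hlogy]
    exact Real.exp_le_exp.2 (by nlinarith)

lemma hasDerivAt_f (e : ℝ) {x : ℝ} (hx : 0 < x) :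
    HasDerivAt (fun t : ℝ => t ^ (-e) * Real.log t)
      (x ^ (-e - 1) * (1 - e * Real.log x)) x := by
  have h1 : HasDerivAt (fun t : ℝ => t ^ (-e)) (-e * x ^ (-e - 1)) x := by
    simpa using Real.hasDerivAt_rpow_const (p := -e) (Or.inl hx.ne')
  have h2 : HasDerivAt Real.log x⁻¹ x := Real.hasDerivAt_log hx.ne'
  have := h1.mul h2
  refine this.congr_deriv ?_
  have hxe : x ^ (-e) * x⁻¹ = x ^ (-e - 1) := by
    rw [← Real.rpow_neg_one x, ← Real.rpow_add hx]; ring_nf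
  rw [← hxe]; ring

lemma hasDerivAt_F (e : ℝ) (he : 1 < e) {x : ℝ} (hx : 0 < x) :
    HasDerivAt (fun t : ℝ => t ^ (1 - e) * (Real.log t / (e - 1) + 1 / (e - 1) ^ 2))
      (-(x ^ (-e) * Real.log x)) x := by
  have he1 : e - 1 ≠ 0 := by intro h; nlinarith
  have h1 : HasDerivAt (fun t : ℝ => t ^ (1 - e)) ((1 - e) * x ^ (-e)) x := by
    have := Real.hasDerivAt_rpow_const (p := 1 - e) (Or.inl hx.ne')
    convert this using 2; ring
  have h2 : HasDerivAt (fun t : ℝ => Real.log t / (e - 1) + 1 / (e - 1) ^ 2)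
      (x⁻¹ / (e - 1)) x := ((Real.hasDerivAt_log hx.ne').div_const _).add_const _
  have := h1.mul h2
  refine this.congr_deriv ?_
  have hxe : x ^ (1 - e) * x⁻¹ = x ^ (-e) := by
    rw [← Real.rpow_neg_one x, ← Real.rpow_add hx]; ring_nf
  have h3 : x ^ (1 - e) * (x⁻¹ / (e - 1)) = x ^ (-e) / (e - 1) := by
    rw [← hxe]; ring
  rw [h3]
  field_simp
  ring

lemma f_antitoneOn (e : ℝ) (he : 1 < e) :
    AntitoneOn (fun x : ℝ => x ^ (-e) * Real.log x) (Ici (Real.exp 1)) := by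
  have hpos : ∀ x ∈ Ici (Real.exp 1), 0 < x := fun x hx =>
    lt_of_lt_of_le (Real.exp_pos 1) hx
  apply antitoneOn_of_deriv_nonpos (convex_Ici _)
  · exact fun x hx => (hasDerivAt_f e (hpos x hx)).continuousAt.continuousWithinAt
  · intro x hx
    rw [interior_Ici] at hx
    exact (hasDerivAt_f e (hpos x (mem_Ici.2 (le_of_lt (mem_Ioi.1 hx))))).differentiableAt.differentiableWithinAt
  · intro x hx
    rw [interior_Ici] at hx
    have hx0 : 0 < x := hpos x (mem_Ici.2 (mem_Ioi.1 hx).le)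
    rw [(hasDerivAt_f e hx0).deriv]
    have hlog : 1 ≤ Real.log x := by
      rw [← Real.log_exp 1]
      exact Real.log_le_log (Real.exp_pos 1) hx.le
    have h1 : 1 - e * Real.log x ≤ 0 := by nlinarith
    have h2 : 0 < x ^ (-e - 1) := Real.rpow_pos_of_pos hx0 _
    exact mul_nonpos_of_nonneg_of_nonpos h2.le h1

lemma neg_mul_log_mono {s t : ℝ} (hs : 0 < s) (hst : s ≤ t) (ht : t ≤ Real.exp (-1)) :
    -(s * Real.log s) ≤ -(t * Real.log t) := by
  have key : MonotoneOn (fun u : ℝ => -(u * Real.log u)) (Icc s (Real.exp (-1))) := by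
    apply monotoneOn_of_deriv_nonneg (convex_Icc _ _)
    · intro x hx
      have hx0 : 0 < x := lt_of_lt_of_le hs hx.1
      exact ((Real.hasDerivAt_mul_log hx0.ne').neg).continuousAt.continuousWithinAt
    · intro x hx
      rw [interior_Icc] at hx
      have hx0 : 0 < x := lt_trans hs hx.1
      exact ((Real.hasDerivAt_mul_log hx0.ne').neg).differentiableAt.differentiableWithinAt
    · intro x hx
      rw [interior_Icc] at hx
      have hx0 : 0 < x := lt_trans hs hx.1
      have hd : deriv (fun u : ℝ => -(u * Real.log u)) x = -(Real.log x + 1) :=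
        ((Real.hasDerivAt_mul_log hx0.ne').neg).deriv
      rw [hd]
      have : Real.log x < -1 := by
        calc Real.log x < Real.log (Real.exp (-1)) := Real.log_lt_log hx0 hx.2
        _ = -1 := Real.log_exp _
      linarith
  exact key ⟨le_rfl, hst.trans ht⟩ ⟨hst, ht⟩ hst

noncomputable def faux (e x : ℝ) : ℝ := x ^ (-e) * Real.log x

noncomputable def Faux (e x : ℝ) : ℝ :=
  x ^ (1 - e) * (Real.log x / (e - 1) + 1 / (e - 1) ^ 2)

lemma faux_nonneg (e : ℝ) {x : ℝ} (hx : 1 ≤ x) : 0 ≤ faux e x :=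
  mul_nonneg (Real.rpow_nonneg (by linarith) _) (Real.log_nonneg hx)

lemma integral_faux (e : ℝ) (he : 1 < e) {u v : ℝ} (hu : 0 < u) (huv : u ≤ v) :
    ∫ x in u..v, faux e x = Faux e u - Faux e v := by
  have hsub : Set.uIcc u v ⊆ Set.Ioi (0:ℝ) := by
    rw [Set.uIcc_of_le huv]
    intro x hx; exact lt_of_lt_of_le hu hx.1
  have hderiv : ∀ x ∈ Set.uIcc u v, HasDerivAt (fun t => -(Faux e t)) (faux e x) x := by
    intro x hx
    have := (hasDerivAt_F e he (hsub hx)).neg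
    exact this.congr_deriv (by simp [faux])
  have hint : IntervalIntegrable (faux e) MeasureTheory.volume u v := by
    apply ContinuousOn.intervalIntegrable
    exact fun x hx => (hasDerivAt_f e (hsub hx)).continuousAt.continuousWithinAt
  have := intervalIntegral.integral_eq_sub_of_hasDerivAt hderiv hint
  rw [this]; ring

lemma F_diff_bounds (e : ℝ) (he : 1 < e) {u v : ℝ} (hu : Real.exp 1 ≤ u) (huv : u ≤ v) :
    (v - u) * faux e v ≤ Faux e u - Faux e v ∧
      Faux e u - Faux e v ≤ (v - u) * faux e u := by
  have hu0 : 0 < u := lt_of_lt_of_le (Real.exp_pos 1) hu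
  have hmem : ∀ x ∈ Set.Icc u v, x ∈ Set.Ici (Real.exp 1) := fun x hx => le_trans hu hx.1
  have hint : IntervalIntegrable (faux e) MeasureTheory.volume u v := by
    apply ContinuousOn.intervalIntegrable
    intro x hx
    rw [Set.uIcc_of_le huv] at hx
    exact (hasDerivAt_f e (lt_of_lt_of_le hu0 hx.1)).continuousAt.continuousWithinAt
  rw [← integral_faux e he hu0 huv]
  constructor
  · have h1 : ∫ _ in u..v, faux e v = (v - u) * faux e v := by
      rw [intervalIntegral.integral_const]; simp [smul_eq_mul]
    rw [← h1]
    apply intervalIntegral.integral_mono_on huv intervalIntegrable_const hint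
    intro x hx
    exact f_antitoneOn e he (hmem x hx) (Set.mem_Ici.2 (le_trans hu huv)) hx.2
  · have h1 : ∫ _ in u..v, faux e u = (v - u) * faux e u := by
      rw [intervalIntegral.integral_const]; simp [smul_eq_mul]
    rw [← h1]
    apply intervalIntegral.integral_mono_on huv hint intervalIntegrable_const
    intro x hx
    exact f_antitoneOn e he (Set.mem_Ici.2 hu) (hmem x hx) hx.1

lemma Faux_nonneg (e : ℝ) (he : 1 < e) {x : ℝ} (hx : 1 ≤ x) : 0 ≤ Faux e x := by
  have h1 : (0:ℝ) < e - 1 := by linarith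
  have : (0:ℝ) ≤ x := by linarith
  apply mul_nonneg (Real.rpow_nonneg this _)
  have := Real.log_nonneg hx
  positivity

lemma tendsto_Faux (e : ℝ) (he : 1 < e) :
    Tendsto (fun x : ℝ => Faux e x) atTop (𝓝 0) := by
  have he' : (0:ℝ) < e - 1 := by linarith
  have h1 : Tendsto (fun x : ℝ => x ^ (1 - e) * Real.log x) atTop (𝓝 0) := by
    have := (isLittleO_log_rpow_atTop he').tendsto_div_nhds_zero
    apply this.congr'
    filter_upwards [eventually_gt_atTop (0:ℝ)] with x hx
    rw [div_eq_mul_inv, ← Real.rpow_neg hx.le, mul_comm]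
    norm_num
  have h2 : Tendsto (fun x : ℝ => x ^ (1 - e)) atTop (𝓝 0) := by
    have := tendsto_rpow_neg_atTop he'
    apply this.congr
    intro x; rw [show -(e-1) = 1 - e by ring]
  have := (h1.div_const (e - 1)).add (h2.mul_const (1 / (e - 1) ^ 2))
  simp only [zero_div, zero_mul, zero_add, add_zero] at this
  apply this.congr
  intro x; simp [Faux]; ring

lemma tail_tsum_bounds (e : ℝ) (he : 1 < e) {u : ℝ} (hu : Real.exp 1 + 1 ≤ u) :
    Summable (fun i : ℕ => faux e (u + i)) ∧
      Faux e u ≤ (∑' i : ℕ, faux e (u + i)) ∧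
        (∑' i : ℕ, faux e (u + i)) ≤ Faux e (u - 1) := by
  have hexp1 : (1:ℝ) < Real.exp 1 := by
    have := Real.exp_one_gt_d9; linarith
  have hu1 : (1:ℝ) ≤ u - 1 := by linarith
  have hnonneg : ∀ i : ℕ, 0 ≤ faux e (u + i) := by
    intro i
    apply faux_nonneg
    have : (0:ℝ) ≤ i := Nat.cast_nonneg i
    linarith
  -- upper bound on partial sums
  have hupper : ∀ N : ℕ, (∑ i ∈ Finset.range N, faux e (u + i)) ≤ Faux e (u - 1) := by
    intro N
    have hstep : ∀ i : ℕ, faux e (u + i) ≤ Faux e (u + i - 1) - Faux e (u + i) := by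
      intro i
      have hi : (0:ℝ) ≤ i := Nat.cast_nonneg i
      have h := (F_diff_bounds e he (u := u + i - 1) (v := u + i) (by linarith) (by linarith)).1
      simpa using h
    set G : ℕ → ℝ := fun i => Faux e (u + i - 1) with hGdef
    have hstep' : ∀ i : ℕ, faux e (u + i) ≤ G i - G (i + 1) := by
      intro i
      have hGi : G (i + 1) = Faux e (u + i) := by
        simp only [hGdef]; congr 1; push_cast; ring
      rw [hGi]; exact hstep i
    calc (∑ i ∈ Finset.range N, faux e (u + i))
        ≤ ∑ i ∈ Finset.range N, (G i - G (i + 1)) :=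
          Finset.sum_le_sum fun i _ => hstep' i
      _ = G 0 - G N := Finset.sum_range_sub' G N
      _ ≤ Faux e (u - 1) := by
          have h0 : G 0 = Faux e (u - 1) := by simp [hGdef]
          have hN : 0 ≤ G N := by
            apply Faux_nonneg e he
            have : (0:ℝ) ≤ N := Nat.cast_nonneg N
            linarith
          rw [h0]; linarith
  have hsummable : Summable (fun i : ℕ => faux e (u + i)) :=
    summable_of_sum_range_le hnonneg hupper
  refine ⟨hsummable, ?_, Real.tsum_le_of_sum_range_le hnonneg hupper⟩
  -- lower bound
  have hlower : ∀ N : ℕ, Faux e u - Faux e (u + N) ≤ ∑ i ∈ Finset.range N, faux e (u + i) := by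
    intro N
    have hstep : ∀ i : ℕ, Faux e (u + i) - Faux e (u + i + 1) ≤ faux e (u + i) := by
      intro i
      have hi : (0:ℝ) ≤ i := Nat.cast_nonneg i
      have h := (F_diff_bounds e he (u := u + i) (v := u + i + 1) (by linarith) (by linarith)).2
      simpa using h
    set G : ℕ → ℝ := fun i => Faux e (u + i) with hGdef
    have hstep' : ∀ i : ℕ, G i - G (i + 1) ≤ faux e (u + i) := by
      intro i
      have hGi : G (i + 1) = Faux e (u + i + 1) := by
        simp only [hGdef]; congr 1; push_cast; ring
      rw [hGi]; exact hstep i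
    calc Faux e u - Faux e (u + N)
        = G 0 - G N := by simp [hGdef]
      _ = ∑ i ∈ Finset.range N, (G i - G (i + 1)) := (Finset.sum_range_sub' G N).symm
      _ ≤ ∑ i ∈ Finset.range N, faux e (u + i) := Finset.sum_le_sum fun i _ => hstep' i
  have hFtend : Tendsto (fun N : ℕ => Faux e u - Faux e (u + N)) atTop (𝓝 (Faux e u)) := by
    have h1 : Tendsto (fun N : ℕ => u + (N:ℝ)) atTop atTop :=
      tendsto_atTop_add_const_left _ u tendsto_natCast_atTop_atTop
    have := (tendsto_Faux e he).comp h1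
    have h2 := (tendsto_const_nhds : Tendsto (fun _ : ℕ => Faux e u) atTop (𝓝 (Faux e u))).sub this
    simpa using h2
  exact le_of_tendsto_of_tendsto' hFtend hsummable.hasSum.tendsto_sum_nat hlower


set_option maxHeartbeats 2000000 in
/-- Asymptotic expansion of the Shannon entropy of the marginal Pitman–Yor
process with discount parameter `d ∈ (0,1)`: the error of the truncated
approximation is `O(n^{-1/d} log n)`. -/
theorem mpy_entropy_asymptotic (d α : ℝ) (hd0 : 0 < d) (hd1 : d < 1) (hα : 0 < α)
    (c : ℝ) (hc : c = (1 - d) * Real.Gamma ((α + 1) / d) / (α * Real.Gamma (α / d)))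
    (g : ℕ → ℝ) (hg : ∀ k : ℕ, g k = Real.Gamma (α / d + k) / Real.Gamma ((α + 1) / d + k))
    (H : ℝ) (hH : H = -∑' k : ℕ, (c * g (k + 1)) * Real.log (c * g (k + 1))) :
    (fun n : ℕ =>
        H -
          (-Real.log c - c * ∑ k ∈ Finset.Icc 1 n, g k * Real.log (g k) +
            c *
              (((n : ℝ) + 1) ^ ((d - 1) / d) / (1 - d) * Real.log ((n : ℝ) + 1) +
                d * ((n : ℝ) + 1) ^ ((d - 1) / d) / (d - 1) ^ 2))) =O[atTop]
      (fun n : ℕ => (n : ℝ) ^ (-1 / d) * Real.log (n : ℝ)) := by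
  have hexp1 : (1:ℝ) < Real.exp 1 := by have := Real.exp_one_gt_d9; linarith
  set ee : ℝ := 1 / d with hee
  set a : ℝ := α / d with ha
  have hee1 : 1 < ee := (one_lt_div hd0).2 hd1
  have ha0 : 0 < a := div_pos hα hd0
  have hb : (α + 1) / d = a + ee := by rw [ha, hee]; ring
  set b : ℝ := a + ee with hbdef
  have hb1 : 1 < b := by simp only [hbdef]; linarith
  have hg' : ∀ k : ℕ, g k = Real.Gamma (a + k) / Real.Gamma (b + k) := by
    intro k; rw [hg k, hb]
  have hgpos : ∀ k : ℕ, 0 < g k := by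
    intro k
    rw [hg' k]
    have h1 : (0:ℝ) < a + k := by positivity
    have h2 : (0:ℝ) < b + k := by
      have : (0:ℝ) ≤ k := Nat.cast_nonneg k
      linarith
    exact div_pos (Real.Gamma_pos_of_pos h1) (Real.Gamma_pos_of_pos h2)
  have hcpos : 0 < c := by
    rw [hc]
    have h1 : 0 < Real.Gamma ((α+1)/d) := Real.Gamma_pos_of_pos (by positivity)
    have h2 : 0 < Real.Gamma a := Real.Gamma_pos_of_pos ha0
    have h3 : (0:ℝ) < 1 - d := by linarith
    positivity
  ---------------------------------------------------------------------------
  -- Part 1 : telescoping, tsum of g (k+1)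
  ---------------------------------------------------------------------------
  set TT : ℕ → ℝ := fun k => Real.Gamma (a + k) / Real.Gamma (b - 1 + k) with hTT
  have hTTpos : ∀ k : ℕ, 0 < TT k := by
    intro k
    have h1 : (0:ℝ) < a + k := by positivity
    have h2 : (0:ℝ) < b - 1 + k := by
      have : (0:ℝ) ≤ k := Nat.cast_nonneg k
      linarith
    exact div_pos (Real.Gamma_pos_of_pos h1) (Real.Gamma_pos_of_pos h2)
  have htel : ∀ k : ℕ, (ee - 1) * g k = TT k - TT (k + 1) := by
    intro k
    have h1 : (0:ℝ) < a + k := by positivity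
    have h2 : (0:ℝ) < b - 1 + k := by
      have : (0:ℝ) ≤ k := Nat.cast_nonneg k
      linarith
    have h3 : (0:ℝ) < b + k := by linarith
    have hGb : Real.Gamma (b + k) = (b - 1 + k) * Real.Gamma (b - 1 + k) := by
      have := Real.Gamma_add_one (s := b - 1 + k) h2.ne'
      rw [← this]; congr 1; ring
    have e1 : TT (k + 1) = (a + k) * Real.Gamma (a + k) / Real.Gamma (b + k) := by
      simp only [hTT]
      rw [show a + ((k+1:ℕ):ℝ) = (a + k) + 1 by push_cast; ring,
        Real.Gamma_add_one h1.ne',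
        show b - 1 + ((k+1:ℕ):ℝ) = b + k by push_cast; ring]
    have e2 : TT k = (b - 1 + k) * Real.Gamma (a + k) / Real.Gamma (b + k) := by
      simp only [hTT]
      rw [hGb]
      have hne := (Real.Gamma_pos_of_pos h2).ne'
      field_simp
    rw [e1, e2, hg' k]
    have hne := (Real.Gamma_pos_of_pos h3).ne'
    field_simp
    rw [hbdef]
    ring
  set G : ℕ → ℝ := fun i => TT (i + 1) / (ee - 1) with hGdef
  have hee0 : (0:ℝ) < ee - 1 := by linarith
  have hpart : ∀ n : ℕ, (∑ i ∈ Finset.range n, g (i + 1)) = G 0 - G n := by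
    intro n
    rw [← Finset.sum_range_sub' G n]
    apply Finset.sum_congr rfl
    intro i _
    simp only [hGdef]
    rw [show i + 1 + 1 = i + 2 from rfl]
    field_simp
    linarith [htel (i + 1)]
  have hTTbound : ∀ n : ℕ, TT (n + 1) ≤ (a + n) ^ (-(ee - 1)) := by
    intro n
    have hy : 1 < a + n + 1 := by
      have : (0:ℝ) ≤ n := Nat.cast_nonneg n
      linarith
    have := (gamma_ratio_bounds (e := ee - 1) hee0 hy).2
    have harg : b - 1 + ((n+1:ℕ):ℝ) = (a + n + 1) + (ee - 1) := by
      rw [hbdef]; push_cast; ring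
    have harg2 : a + ((n+1:ℕ):ℝ) = a + n + 1 := by push_cast; ring
    simp only [hTT]
    rw [harg, harg2]
    convert this using 2
    ring
  have hTTtend : Tendsto (fun n : ℕ => TT (n + 1)) atTop (𝓝 0) := by
    apply squeeze_zero (fun n => (hTTpos (n + 1)).le) hTTbound
    have h1 : Tendsto (fun n : ℕ => a + (n:ℝ)) atTop atTop :=
      tendsto_atTop_add_const_left _ a tendsto_natCast_atTop_atTop
    exact (tendsto_rpow_neg_atTop hee0).comp h1
  have hGtend : Tendsto (fun n : ℕ => G 0 - G n) atTop (𝓝 (G 0)) := by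
    have : Tendsto (fun n : ℕ => G n) atTop (𝓝 0) := by
      simp only [hGdef]
      simpa using hTTtend.div_const (ee - 1)
    simpa using ((tendsto_const_nhds :
      Tendsto (fun _ : ℕ => G 0) atTop (𝓝 (G 0))).sub this)
  have hsumg : Summable (fun k : ℕ => g (k + 1)) := by
    apply summable_of_sum_range_le (c := G 0) (fun n => (hgpos (n + 1)).le)
    intro n
    rw [hpart n]
    have : 0 < G n := div_pos (hTTpos (n + 1)) hee0
    linarith
  have htsum : (∑' k : ℕ, g (k + 1)) = G 0 := by
    have h1 := hsumg.hasSum.tendsto_sum_nat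
    have h2 : Tendsto (fun n : ℕ => ∑ i ∈ Finset.range n, g (i + 1)) atTop (𝓝 (G 0)) := by
      apply hGtend.congr
      intro n; rw [hpart n]
    exact tendsto_nhds_unique h1 h2
  have hone : c * ∑' k : ℕ, g (k + 1) = 1 := by
    rw [htsum]
    simp only [hGdef, hTT]
    have hT1 : Real.Gamma (a + ((1:ℕ):ℝ)) = a * Real.Gamma a := by
      rw [show a + ((1:ℕ):ℝ) = a + 1 by push_cast; ring, Real.Gamma_add_one ha0.ne']
    have hT2 : b - 1 + ((1:ℕ):ℝ) = b := by push_cast; ring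
    rw [hT1, hT2, hc]
    have hGa := (Real.Gamma_pos_of_pos ha0).ne'
    have hGb := (Real.Gamma_pos_of_pos (by linarith : (0:ℝ) < b)).ne'
    have h1d : (1:ℝ) - d ≠ 0 := by linarith
    have heed : ee - 1 = (1 - d)/d := by rw [hee]; field_simp
    rw [hb, heed, ha]
    field_simp
  ---------------------------------------------------------------------------
  -- Part 2 : pointwise sandwich for -(g k log g k)
  ---------------------------------------------------------------------------
  have heepos : (0:ℝ) < ee := by linarith
  have hcond : ∀ k : ℕ, Real.exp 1 + 1 ≤ (k:ℝ) →
      ee * faux ee ((k:ℝ) + b) ≤ -(g k * Real.log (g k)) ∧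
        -(g k * Real.log (g k)) ≤ ee * faux ee ((k:ℝ) + (a - 1)) := by
    intro k hk
    have hk1 : (1:ℝ) ≤ (k:ℝ) := by linarith
    have hy : 1 < a + (k:ℝ) := by linarith
    have hbnd := gamma_ratio_bounds (e := ee) heepos hy
    have hnum : Real.Gamma (a + (k:ℝ)) / Real.Gamma ((a + (k:ℝ)) + ee) = g k := by
      rw [hg' k]; congr 2; rw [hbdef]; ring
    rw [hnum] at hbnd
    have hX1 : a + (k:ℝ) - 1 = (k:ℝ) + (a - 1) := by ring
    have hX2 : a + (k:ℝ) + ee = (k:ℝ) + b := by rw [hbdef]; ring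
    rw [hX1, hX2] at hbnd
    set X1 : ℝ := (k:ℝ) + (a - 1) with hX1d
    set X2 : ℝ := (k:ℝ) + b with hX2d
    have hX1e : Real.exp 1 ≤ X1 := by simp only [hX1d]; linarith
    have hX2e : Real.exp 1 ≤ X2 := by simp only [hX2d]; linarith
    have hX1pos : (0:ℝ) < X1 := by linarith
    have hX2pos : (0:ℝ) < X2 := by linarith
    have hX1one : (1:ℝ) ≤ X1 := by linarith
    have hU : X1 ^ (-ee) ≤ Real.exp (-1) := by
      calc X1 ^ (-ee) ≤ X1 ^ (-1:ℝ) :=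
            Real.rpow_le_rpow_of_exponent_le hX1one (by linarith)
        _ = X1⁻¹ := Real.rpow_neg_one X1
        _ ≤ (Real.exp 1)⁻¹ := by
            apply inv_anti₀ (Real.exp_pos 1) hX1e
        _ = Real.exp (-1) := by rw [← Real.exp_neg]
    have hLpos : 0 < X2 ^ (-ee) := Real.rpow_pos_of_pos hX2pos _
    have hUval : -(X1 ^ (-ee) * Real.log (X1 ^ (-ee))) = ee * faux ee X1 := by
      rw [Real.log_rpow hX1pos, faux]; ring
    have hLval : -(X2 ^ (-ee) * Real.log (X2 ^ (-ee))) = ee * faux ee X2 := by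
      rw [Real.log_rpow hX2pos, faux]; ring
    constructor
    · rw [← hLval]
      exact neg_mul_log_mono hLpos hbnd.1 (le_trans hbnd.2 hU)
    · rw [← hUval]
      exact neg_mul_log_mono (hgpos k) hbnd.2 hU
  ---------------------------------------------------------------------------
  -- Part 3 : summability of h (k+1) where h k = g k * log (g k)
  ---------------------------------------------------------------------------
  set K0 : ℕ := ⌈Real.exp 1 + 2⌉₊ with hK0d
  have hK0 : Real.exp 1 + 2 ≤ (K0:ℝ) := Nat.le_ceil _
  have hsumh : Summable (fun k : ℕ => g (k + 1) * Real.log (g (k + 1))) := by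
    rw [← summable_nat_add_iff K0]
    apply Summable.of_norm
    have hmaj : Summable (fun i : ℕ => ee * faux ee (((K0:ℝ) + a) + i)) :=
      ((tail_tsum_bounds ee hee1 (u := (K0:ℝ) + a) (by linarith)).1).mul_left ee
    apply Summable.of_nonneg_of_le (fun k => norm_nonneg _) ?_ hmaj
    intro k
    have hkz : (0:ℝ) ≤ (k:ℝ) := Nat.cast_nonneg k
    have hk : Real.exp 1 + 1 ≤ ((k + K0 + 1 : ℕ):ℝ) := by push_cast; linarith
    have hcnd := hcond (k + K0 + 1) hk
    have harg : ((k + K0 + 1 : ℕ):ℝ) + (a - 1) = ((K0:ℝ) + a) + k := by push_cast; ring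
    have harg2 : (1:ℝ) ≤ ((k + K0 + 1:ℕ):ℝ) + b := by push_cast; linarith
    rw [harg] at hcnd
    have hneg : g (k + K0 + 1) * Real.log (g (k + K0 + 1)) ≤ 0 := by
      have h0 : 0 ≤ ee * faux ee (((k + K0 + 1:ℕ):ℝ) + b) :=
        mul_nonneg heepos.le (faux_nonneg _ harg2)
      linarith [hcnd.1]
    rw [Real.norm_eq_abs, abs_of_nonpos hneg]
    exact hcnd.2
  ---------------------------------------------------------------------------
  -- Part 4 : entropy decomposition
  ---------------------------------------------------------------------------
  have hHdec : H = -Real.log c - c * ∑' k : ℕ, g (k + 1) * Real.log (g (k + 1)) := by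
    rw [hH]
    have hterm : ∀ k : ℕ, (c * g (k + 1)) * Real.log (c * g (k + 1)) =
        (c * Real.log c) * g (k + 1) + c * (g (k + 1) * Real.log (g (k + 1))) := by
      intro k
      rw [Real.log_mul hcpos.ne' (hgpos (k+1)).ne']
      ring
    rw [tsum_congr hterm, Summable.tsum_add (hsumg.mul_left _) (hsumh.mul_left c),
      tsum_mul_left, tsum_mul_left]
    rw [show (c * Real.log c) * ∑' k : ℕ, g (k+1) =
      Real.log c * (c * ∑' k : ℕ, g (k+1)) by ring, hone]
    ring
  ---------------------------------------------------------------------------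
  -- Part 5 : the error bound
  ---------------------------------------------------------------------------
  set M : ℝ := b + 2 with hMd
  have hM2 : (2:ℝ) ≤ M := by simp only [hMd]; linarith
  have hMb : b + 1 ≤ M := by simp only [hMd]; linarith
  set N : ℕ := ⌈Real.exp 1 + 2*M + 3⌉₊ with hNd
  rw [Asymptotics.isBigO_iff]
  refine ⟨c * ee * (2*M) * (2:ℝ) ^ ee, ?_⟩
  filter_upwards [eventually_ge_atTop N] with n hnN
  have hnr : Real.exp 1 + 2*M + 3 ≤ (n:ℝ) :=
    le_trans (Nat.le_ceil _) (Nat.cast_le.2 hnN)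
  have hn1 : (1:ℝ) ≤ (n:ℝ) := by linarith
  -- identity for the LHS
  have hsplit := Summable.sum_add_tsum_nat_add (f := fun k : ℕ => g (k + 1) * Real.log (g (k + 1))) n hsumh
  have hIcc : (∑ k ∈ Finset.Icc 1 n, g k * Real.log (g k)) =
      ∑ i ∈ Finset.range n, g (i + 1) * Real.log (g (i + 1)) := by
    rw [← Finset.Ico_add_one_right_eq_Icc, Finset.sum_Ico_eq_sum_range]
    norm_num
    apply Finset.sum_congr rfl
    intro i _
    rw [Nat.add_comm]
  have hEF : (((n:ℝ) + 1) ^ ((d - 1) / d) / (1 - d) * Real.log ((n:ℝ) + 1) +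
      d * ((n:ℝ) + 1) ^ ((d - 1) / d) / (d - 1) ^ 2) = ee * Faux ee ((n:ℝ) + 1) := by
    have hexp : (d - 1) / d = 1 - ee := by rw [hee]; field_simp
    have h1d : (1:ℝ) - d ≠ 0 := by linarith
    have hd1' : d - 1 ≠ 0 := by intro hh; apply h1d; linarith
    rw [hexp, Faux, hee]
    have hdd : (1/d - 1) = (1-d)/d := by field_simp
    rw [hdd]
    field_simp
    ring
  have hval : H - (-Real.log c - c * ∑ k ∈ Finset.Icc 1 n, g k * Real.log (g k) +
      c * (((n:ℝ) + 1) ^ ((d - 1) / d) / (1 - d) * Real.log ((n:ℝ) + 1) +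
        d * ((n:ℝ) + 1) ^ ((d - 1) / d) / (d - 1) ^ 2)) =
      c * ((∑' i : ℕ, -(g (i + n + 1) * Real.log (g (i + n + 1)))) - ee * Faux ee ((n:ℝ) + 1)) := by
    rw [hHdec, hIcc, hEF, tsum_neg, ← hsplit]
    ring
  rw [hval]
  -- tail bounds
  have hsum_tail : Summable (fun i : ℕ => g (i + n + 1) * Real.log (g (i + n + 1))) :=
    (summable_nat_add_iff n).2 hsumh
  have hnM : Real.exp 1 + 1 ≤ (n:ℝ) - M := by linarith
  have hTup : (∑' i : ℕ, -(g (i + n + 1) * Real.log (g (i + n + 1)))) ≤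
      ee * Faux ee ((n:ℝ) + a - 1) := by
    have htt := tail_tsum_bounds ee hee1 (u := (n:ℝ) + a) (by linarith)
    calc (∑' i : ℕ, -(g (i + n + 1) * Real.log (g (i + n + 1))))
        ≤ ∑' i : ℕ, ee * faux ee (((n:ℝ) + a) + i) := by
          apply Summable.tsum_le_tsum ?_ hsum_tail.neg (htt.1.mul_left ee)
          intro i
          have hiz : (0:ℝ) ≤ (i:ℝ) := Nat.cast_nonneg i
          have hk : Real.exp 1 + 1 ≤ ((i + n + 1:ℕ):ℝ) := by push_cast; linarith
          have hcnd := (hcond (i + n + 1) hk).2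
          have harg : ((i + n + 1:ℕ):ℝ) + (a - 1) = ((n:ℝ) + a) + i := by push_cast; ring
          rwa [harg] at hcnd
      _ = ee * ∑' i : ℕ, faux ee (((n:ℝ) + a) + i) := tsum_mul_left
      _ ≤ ee * Faux ee ((n:ℝ) + a - 1) := by
          have h2 := htt.2.2
          rw [show (n:ℝ) + a - 1 = ((n:ℝ) + a) - 1 by ring]
          exact mul_le_mul_of_nonneg_left h2 heepos.le
  have hTlo : ee * Faux ee ((n:ℝ) + 1 + b) ≤
      (∑' i : ℕ, -(g (i + n + 1) * Real.log (g (i + n + 1)))) := by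
    have htt := tail_tsum_bounds ee hee1 (u := (n:ℝ) + 1 + b) (by linarith)
    calc ee * Faux ee ((n:ℝ) + 1 + b)
        ≤ ee * ∑' i : ℕ, faux ee (((n:ℝ) + 1 + b) + i) :=
          mul_le_mul_of_nonneg_left htt.2.1 heepos.le
      _ = ∑' i : ℕ, ee * faux ee (((n:ℝ) + 1 + b) + i) := tsum_mul_left.symm
      _ ≤ ∑' i : ℕ, -(g (i + n + 1) * Real.log (g (i + n + 1))) := by
          apply Summable.tsum_le_tsum ?_ (htt.1.mul_left ee) hsum_tail.neg
          intro i
          have hiz : (0:ℝ) ≤ (i:ℝ) := Nat.cast_nonneg i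
          have hk : Real.exp 1 + 1 ≤ ((i + n + 1:ℕ):ℝ) := by push_cast; linarith
          have hcnd := (hcond (i + n + 1) hk).1
          have harg : ((i + n + 1:ℕ):ℝ) + b = ((n:ℝ) + 1 + b) + i := by push_cast; ring
          rwa [harg] at hcnd
  -- Faux is antitone on [e, ∞)
  have hFanti : ∀ x y : ℝ, Real.exp 1 ≤ x → x ≤ y → Faux ee y ≤ Faux ee x := by
    intro x y hx hxy
    have h := (F_diff_bounds ee hee1 hx hxy).1
    have hfy : 0 ≤ faux ee y := faux_nonneg _ (by linarith)
    nlinarith [mul_nonneg (sub_nonneg.2 hxy) hfy]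
  have hw1 : Faux ee ((n:ℝ) + a - 1) ≤ Faux ee ((n:ℝ) - M) :=
    hFanti _ _ (by linarith) (by linarith)
  have hw2 : Faux ee ((n:ℝ) + M) ≤ Faux ee ((n:ℝ) + 1) :=
    hFanti _ _ (by linarith) (by linarith)
  have hw3 : Faux ee ((n:ℝ) + M) ≤ Faux ee ((n:ℝ) + 1 + b) :=
    hFanti _ _ (by linarith) (by linarith)
  have hw4 : Faux ee ((n:ℝ) + 1) ≤ Faux ee ((n:ℝ) - M) :=
    hFanti _ _ (by linarith) (by linarith)
  have habs : |(∑' i : ℕ, -(g (i + n + 1) * Real.log (g (i + n + 1)))) -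
      ee * Faux ee ((n:ℝ) + 1)| ≤ ee * (Faux ee ((n:ℝ) - M) - Faux ee ((n:ℝ) + M)) := by
    rw [abs_le]
    constructor
    · nlinarith
    · nlinarith
  -- F-window bound by f
  have hwin := (F_diff_bounds ee hee1 (u := (n:ℝ) - M) (v := (n:ℝ) + M)
    (by linarith) (by linarith)).2
  rw [show (n:ℝ) + M - ((n:ℝ) - M) = 2*M by ring] at hwin
  -- f bound by the target
  have hfb : faux ee ((n:ℝ) - M) ≤ (2:ℝ) ^ ee * ((n:ℝ) ^ (-ee) * Real.log (n:ℝ)) := by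
    have hhalf : (n:ℝ)/2 ≤ (n:ℝ) - M := by linarith
    have hhalfpos : (0:ℝ) < (n:ℝ)/2 := by linarith
    have h1 : ((n:ℝ) - M) ^ (-ee) ≤ ((n:ℝ)/2) ^ (-ee) :=
      Real.rpow_le_rpow_of_nonpos hhalfpos hhalf (by linarith)
    have h2 : ((n:ℝ)/2) ^ (-ee) = (2:ℝ) ^ ee * (n:ℝ) ^ (-ee) := by
      rw [Real.div_rpow (by linarith) (by norm_num), Real.rpow_neg (by norm_num : (0:ℝ) ≤ 2)]
      field_simp
    have h3 : Real.log ((n:ℝ) - M) ≤ Real.log (n:ℝ) := by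
      apply Real.log_le_log (by linarith)
      linarith
    have h4 : 0 ≤ Real.log ((n:ℝ) - M) := Real.log_nonneg (by linarith)
    calc faux ee ((n:ℝ) - M) = ((n:ℝ) - M) ^ (-ee) * Real.log ((n:ℝ) - M) := rfl
      _ ≤ ((n:ℝ)/2) ^ (-ee) * Real.log (n:ℝ) := by
          apply mul_le_mul h1 h3 h4 (Real.rpow_nonneg (by linarith) _)
      _ = (2:ℝ) ^ ee * ((n:ℝ) ^ (-ee) * Real.log (n:ℝ)) := by rw [h2]; ring
  -- put everything together
  have hrhs : ‖(n:ℝ) ^ (-1/d) * Real.log (n:ℝ)‖ = (n:ℝ) ^ (-ee) * Real.log (n:ℝ) := by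
    rw [Real.norm_eq_abs, abs_of_nonneg]
    · congr 2
      rw [hee]; ring
    · exact mul_nonneg (Real.rpow_nonneg (by linarith) _) (Real.log_nonneg hn1)
  rw [hrhs, Real.norm_eq_abs, abs_mul, abs_of_pos hcpos]
  have hfnn : 0 ≤ faux ee ((n:ℝ) - M) := faux_nonneg _ (by linarith)
  have hlognn : 0 ≤ (n:ℝ) ^ (-ee) * Real.log (n:ℝ) :=
    mul_nonneg (Real.rpow_nonneg (by linarith) _) (Real.log_nonneg hn1)
  have h2pos : (0:ℝ) < (2:ℝ) ^ ee := Real.rpow_pos_of_pos (by norm_num) _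
  calc c * |(∑' i : ℕ, -(g (i + n + 1) * Real.log (g (i + n + 1)))) - ee * Faux ee ((n:ℝ) + 1)|
      ≤ c * (ee * (Faux ee ((n:ℝ) - M) - Faux ee ((n:ℝ) + M))) :=
        mul_le_mul_of_nonneg_left habs hcpos.le
    _ ≤ c * (ee * (2*M * faux ee ((n:ℝ) - M))) := by
        apply mul_le_mul_of_nonneg_left _ hcpos.le
        exact mul_le_mul_of_nonneg_left hwin heepos.le
    _ ≤ c * (ee * (2*M * ((2:ℝ) ^ ee * ((n:ℝ) ^ (-ee) * Real.log (n:ℝ))))) := by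
        apply mul_le_mul_of_nonneg_left _ hcpos.le
        apply mul_le_mul_of_nonneg_left _ heepos.le
        apply mul_le_mul_of_nonneg_left hfb (by linarith)
    _ = c * ee * (2*M) * (2:ℝ) ^ ee * ((n:ℝ) ^ (-ee) * Real.log (n:ℝ)) := by ring
end

section
/- Let K, T, N be positive integers with T ≤ K, let d ∈ [0,1) and α > 0. Let p_1,…,p_K be positive reals with ∑_{i=1}^{K} p_i = 1 and suppose p_{T+1} ≥ p_{T+2} ≥ ⋯ ≥ p_K. Let n_1,…,n_T be positive integers with ∑_{i=1}^{T} n_i = N. Define q_i = (n_i − d)/(N+α) for 1 ≤ i ≤ T and q_{T+i} = ((1−d)/(N+α))·∏_{j=1}^{i} (α+(T+j−1)d)/(α+(T+j−1)d+1) for 1 ≤ i ≤ K−T. Set C_1 = ∑_{i=1}^{T} p_i·1{n_i = 1} and C_0 = ∑_{i=T+1}^{K} p_i. Then the cross entropy satisfies −∑_{i=1}^{K} p_i·log q_i ≤ log(N+α) − (C_1 + C_0)·log(1−d) + (C_0/2)·(K−T+1)·log((α+Td+1)/(α+Td)). -/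
/-- Gauss' summation formula over `Icc 1 M`, in `ℝ`. -/
lemma dpym_gauss_sum (M : ℕ) :
    ∑ m ∈ Finset.Icc 1 M, (m : ℝ) = (M : ℝ) * ((M : ℝ) + 1) / 2 := by
  induction M with
  | zero => simp
  | succ M ih =>
    rw [Finset.sum_Icc_succ_top (by omega : 1 ≤ M + 1), ih]
    push_cast; ring

/-- Upper bound on the cross entropy between the true distribution `p` and the
predictive probability vector `q` of the Dirichlet–Pitman–Yor mixture model. -/
theorem dpym_cross_entropy_upper_bound
    (K T N : ℕ) (hK : 0 < K) (hT : 0 < T) (hN : 0 < N) (hTK : T ≤ K)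
    (d α : ℝ) (hd0 : 0 ≤ d) (hd1 : d < 1) (hα : 0 < α)
    (p : ℕ → ℝ) (hppos : ∀ i ∈ Finset.Icc 1 K, 0 < p i)
    (hpsum : ∑ i ∈ Finset.Icc 1 K, p i = 1)
    (hpmono : ∀ i j : ℕ, T + 1 ≤ i → i ≤ j → j ≤ K → p j ≤ p i)
    (n : ℕ → ℕ) (hnpos : ∀ i ∈ Finset.Icc 1 T, 0 < n i)
    (hnsum : ∑ i ∈ Finset.Icc 1 T, n i = N)
    (q : ℕ → ℝ)
    (hq1 : ∀ i ∈ Finset.Icc 1 T, q i = ((n i : ℝ) - d) / ((N : ℝ) + α))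
    (hq2 : ∀ i ∈ Finset.Icc 1 (K - T),
      q (T + i) =
        ((1 - d) / ((N : ℝ) + α)) *
          ∏ j ∈ Finset.Icc 1 i,
            (α + ((T : ℝ) + (j : ℝ) - 1) * d) / (α + ((T : ℝ) + (j : ℝ) - 1) * d + 1))
    (C₁ C₀ : ℝ)
    (hC₁ : C₁ = ∑ i ∈ Finset.Icc 1 T, if n i = 1 then p i else 0)
    (hC₀ : C₀ = ∑ i ∈ Finset.Icc (T + 1) K, p i) :
    -∑ i ∈ Finset.Icc 1 K, p i * Real.log (q i) ≤
      Real.log ((N : ℝ) + α) - (C₁ + C₀) * Real.log (1 - d) +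
        (C₀ / 2) * ((K : ℝ) - (T : ℝ) + 1) *
          Real.log ((α + (T : ℝ) * d + 1) / (α + (T : ℝ) * d)) := by
  have hNα : (0:ℝ) < (N : ℝ) + α := by positivity
  have h1d : (0:ℝ) < 1 - d := by linarith
  have haT : (0:ℝ) < α + (T:ℝ) * d := by positivity
  set M := K - T with hM
  set L := Real.log ((α + (T:ℝ) * d + 1) / (α + (T:ℝ) * d)) with hLdef
  set A := Real.log ((N:ℝ) + α) with hAdef
  set B := Real.log (1 - d) with hBdef
  have hL0 : 0 ≤ L := Real.log_nonneg (by rw [le_div_iff₀ haT]; linarith)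
  -- splitting sums
  have hsum : ∀ f : ℕ → ℝ, ∑ i ∈ Finset.Icc 1 K, f i
      = ∑ i ∈ Finset.Icc 1 T, f i + ∑ i ∈ Finset.Icc (T+1) K, f i := by
    intro f
    rw [show Finset.Icc 1 T = Finset.Ioc 0 T from Finset.Icc_add_one_left_eq_Ioc 0 T,
        show Finset.Icc (T+1) K = Finset.Ioc T K from Finset.Icc_add_one_left_eq_Ioc T K,
        show Finset.Icc 1 K = Finset.Ioc 0 K from Finset.Icc_add_one_left_eq_Ioc 0 K,
        Finset.sum_Ioc_consecutive _ (Nat.zero_le T) hTK]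
  -- reindexing the tail sum
  have hre : ∀ f : ℕ → ℝ, ∑ i ∈ Finset.Icc (T+1) K, f i
      = ∑ m ∈ Finset.Icc 1 M, f (T + m) := by
    intro f
    rw [show K = T + M from by omega, ← Finset.map_add_left_Icc, Finset.sum_map]
    rfl
  -- head per-term bound
  have hb1 : ∀ i ∈ Finset.Icc 1 T, p i * (-Real.log (q i))
      ≤ p i * A - (if n i = 1 then p i else 0) * B := by
    intro i hi
    have hiT := Finset.mem_Icc.mp hi
    have hp : 0 < p i := hppos i (Finset.mem_Icc.mpr ⟨hiT.1, le_trans hiT.2 hTK⟩)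
    have hn : 0 < n i := hnpos i hi
    have hn1 : (1:ℝ) ≤ (n i : ℝ) := by exact_mod_cast hn
    have hnd : (0:ℝ) < (n i : ℝ) - d := by linarith
    rw [hq1 i hi, Real.log_div (ne_of_gt hnd) (ne_of_gt hNα), hAdef, hBdef]
    by_cases h : n i = 1
    · rw [if_pos h]
      have hcast : ((n i : ℕ) : ℝ) = 1 := by rw [h]; norm_num
      rw [hcast]
      ring_nf
      exact le_refl _
    · rw [if_neg h]
      have h2 : 2 ≤ n i := by omega
      have h2' : (2:ℝ) ≤ (n i : ℝ) := by exact_mod_cast h2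
      have hlog : (0:ℝ) ≤ Real.log ((n i : ℝ) - d) := Real.log_nonneg (by linarith)
      nlinarith [mul_nonneg hp.le hlog]
  -- tail per-term bound on -log q (T + m)
  have hb2 : ∀ m ∈ Finset.Icc 1 M, -Real.log (q (T + m)) ≤ A - B + (m : ℝ) * L := by
    intro m hm
    set a : ℕ → ℝ := fun j => α + ((T : ℝ) + (j : ℝ) - 1) * d with ha
    have hapos : ∀ j ∈ Finset.Icc 1 m, 0 < a j := by
      intro j hj
      have hj1 : 1 ≤ j := (Finset.mem_Icc.mp hj).1
      have hjc : (1:ℝ) ≤ (j:ℝ) := by exact_mod_cast hj1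
      have hTnn : (0:ℝ) ≤ (T:ℝ) := Nat.cast_nonneg T
      have : (0:ℝ) ≤ ((T:ℝ) + (j:ℝ) - 1) * d := mul_nonneg (by linarith) hd0
      simp only [ha]; linarith
    have hprodpos : ∀ j ∈ Finset.Icc 1 m, (0:ℝ) < a j / (a j + 1) := by
      intro j hj
      have := hapos j hj
      positivity
    have hlogq : -Real.log (q (T + m)) = A - B
        + ∑ j ∈ Finset.Icc 1 m, Real.log ((a j + 1) / a j) := by
      rw [hq2 m hm, Real.log_mul (by positivity)
          (ne_of_gt (Finset.prod_pos hprodpos)),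
        Real.log_div (ne_of_gt h1d) (ne_of_gt hNα),
        Real.log_prod (fun j hj => ne_of_gt (hprodpos j hj))]
      have : ∀ j ∈ Finset.Icc 1 m, Real.log (a j / (a j + 1))
          = -Real.log ((a j + 1) / a j) := by
        intro j hj
        have h := hapos j hj
        rw [Real.log_div (ne_of_gt h) (by positivity),
            Real.log_div (by positivity) (ne_of_gt h)]
        ring
      rw [Finset.sum_congr rfl this, Finset.sum_neg_distrib, hAdef, hBdef]
      ring
    rw [hlogq]
    have hterm : ∀ j ∈ Finset.Icc 1 m, Real.log ((a j + 1) / a j) ≤ L := by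
      intro j hj
      have haj := hapos j hj
      have hj1 : 1 ≤ j := (Finset.mem_Icc.mp hj).1
      have hjc : (1:ℝ) ≤ (j:ℝ) := by exact_mod_cast hj1
      have hle : α + (T:ℝ) * d ≤ a j := by
        simp only [ha]; nlinarith
      apply Real.log_le_log (by positivity)
      rw [div_le_div_iff₀ haj haT]
      nlinarith
    have := Finset.sum_le_card_nsmul _ _ _ hterm
    simp only [Nat.card_Icc, Nat.add_sub_cancel, nsmul_eq_mul] at this
    linarith
  -- Chebyshev sum inequality for the tail
  have hcheb : ∑ m ∈ Finset.Icc 1 M, p (T + m) * (m:ℝ)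
      ≤ (∑ m ∈ Finset.Icc 1 M, p (T + m)) * ((M:ℝ) + 1) / 2 := by
    rcases Nat.eq_zero_or_pos M with h0 | hMpos
    · rw [h0]; simp
    · have hanti : AntivaryOn (fun m => p (T + m)) (fun m => (m:ℝ))
          (Finset.Icc 1 M : Finset ℕ) := by
        intro i hi j hj hij
        simp only [Finset.coe_Icc, Set.mem_Icc] at hi hj
        have hij2 : (i:ℝ) < (j:ℝ) := hij
        have hij' : i ≤ j := le_of_lt (by exact_mod_cast hij2)
        exact hpmono (T + i) (T + j) (by omega) (by omega) (by omega)
      have hcheb' := hanti.card_mul_sum_le_sum_mul_sum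
      rw [Nat.card_Icc, Nat.add_sub_cancel, dpym_gauss_sum] at hcheb'
      have hMc : (0:ℝ) < (M:ℝ) := by exact_mod_cast hMpos
      nlinarith [hcheb']
  -- assemble
  have hLHS : -∑ i ∈ Finset.Icc 1 K, p i * Real.log (q i)
      = ∑ i ∈ Finset.Icc 1 T, p i * (-Real.log (q i))
        + ∑ m ∈ Finset.Icc 1 M, p (T + m) * (-Real.log (q (T + m))) := by
    rw [← Finset.sum_neg_distrib,
        Finset.sum_congr rfl (fun i _ => (mul_neg (p i) (Real.log (q i))).symm),
        hsum (fun i => p i * (-Real.log (q i))), hre (fun i => p i * (-Real.log (q i)))]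
  rw [hLHS]
  -- bound on the head sum
  have hS1 : ∑ i ∈ Finset.Icc 1 T, p i * (-Real.log (q i))
      ≤ (∑ i ∈ Finset.Icc 1 T, p i) * A - C₁ * B := by
    calc ∑ i ∈ Finset.Icc 1 T, p i * (-Real.log (q i))
        ≤ ∑ i ∈ Finset.Icc 1 T, (p i * A - (if n i = 1 then p i else 0) * B) :=
          Finset.sum_le_sum hb1
      _ = (∑ i ∈ Finset.Icc 1 T, p i) * A - C₁ * B := by
          rw [Finset.sum_sub_distrib, ← Finset.sum_mul, ← Finset.sum_mul, hC₁]
  -- bound on the tail sum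
  have hC₀' : C₀ = ∑ m ∈ Finset.Icc 1 M, p (T + m) := by rw [hC₀, hre]
  have hppos' : ∀ m ∈ Finset.Icc 1 M, 0 ≤ p (T + m) := by
    intro m hm
    have hm' := Finset.mem_Icc.mp hm
    exact (hppos (T + m) (Finset.mem_Icc.mpr ⟨by omega, by omega⟩)).le
  have hS2 : ∑ m ∈ Finset.Icc 1 M, p (T + m) * (-Real.log (q (T + m)))
      ≤ C₀ * (A - B) + L * ∑ m ∈ Finset.Icc 1 M, p (T + m) * (m:ℝ) := by
    calc ∑ m ∈ Finset.Icc 1 M, p (T + m) * (-Real.log (q (T + m)))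
        ≤ ∑ m ∈ Finset.Icc 1 M, p (T + m) * (A - B + (m:ℝ) * L) :=
          Finset.sum_le_sum fun m hm =>
            mul_le_mul_of_nonneg_left (hb2 m hm) (hppos' m hm)
      _ = C₀ * (A - B) + L * ∑ m ∈ Finset.Icc 1 M, p (T + m) * (m:ℝ) := by
          rw [hC₀', Finset.sum_mul, Finset.mul_sum, ← Finset.sum_add_distrib]
          exact Finset.sum_congr rfl fun m _ => by ring
  -- total mass split
  have hPsplit : (∑ i ∈ Finset.Icc 1 T, p i) + C₀ = 1 := by
    rw [hC₀, ← hsum p, hpsum]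
  -- final bound on the Chebyshev term
  have hMcast : (M:ℝ) = (K:ℝ) - (T:ℝ) := by
    rw [hM, Nat.cast_sub hTK]
  have hfin : L * ∑ m ∈ Finset.Icc 1 M, p (T + m) * (m:ℝ)
      ≤ (C₀ / 2) * ((K:ℝ) - (T:ℝ) + 1) * L := by
    have h1 := mul_le_mul_of_nonneg_left hcheb hL0
    rw [← hC₀'] at h1
    calc L * ∑ m ∈ Finset.Icc 1 M, p (T + m) * (m:ℝ)
        ≤ L * (C₀ * ((M:ℝ) + 1) / 2) := h1
      _ = (C₀ / 2) * ((K:ℝ) - (T:ℝ) + 1) * L := by rw [hMcast]; ring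
  calc ∑ i ∈ Finset.Icc 1 T, p i * (-Real.log (q i))
      + ∑ m ∈ Finset.Icc 1 M, p (T + m) * (-Real.log (q (T + m)))
      ≤ ((∑ i ∈ Finset.Icc 1 T, p i) * A - C₁ * B)
        + (C₀ * (A - B) + L * ∑ m ∈ Finset.Icc 1 M, p (T + m) * (m:ℝ)) :=
        add_le_add hS1 hS2
    _ ≤ ((∑ i ∈ Finset.Icc 1 T, p i) * A - C₁ * B)
        + (C₀ * (A - B) + (C₀ / 2) * ((K:ℝ) - (T:ℝ) + 1) * L) := by linarith [hfin]
    _ = ((∑ i ∈ Finset.Icc 1 T, p i) + C₀) * A - (C₁ + C₀) * B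
        + (C₀ / 2) * ((K:ℝ) - (T:ℝ) + 1) * L := by ring
    _ = A - (C₁ + C₀) * B + (C₀ / 2) * ((K:ℝ) - (T:ℝ) + 1) * L := by
        rw [hPsplit, one_mul]
end

section
/- Let T, N be positive reals, let C ∈ (0,1) and F > 0, and define f(d,α) = log(N+α) − C·log(1−d) + F·log((α+Td+1)/(α+Td)). Suppose d ∈ [0,1) and α are such that α + Td > 0 and N + α > 0, and suppose both partial derivatives of f vanish at (d,α), i.e., the function α' ↦ f(d,α') has derivative 0 at α' = α and the function d' ↦ f(d',α) has derivative 0 at d' = d. Then α = T(1−d)/C − N and a·d² + b·d + c = 0, where a = (C−1)²T², b = {(2T − 2CN + C)(C−1) + FC}·T and c = (T − CN + C)(T − CN) − TFC. -/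
set_option maxHeartbeats 1000000


/-- Characterization of the critical points of the cross-entropy upper bound
function of the Dirichlet–Pitman–Yor mixture model. -/
theorem upper_bound_critical_points
    (T N C F d α : ℝ) (hT : 0 < T) (hN : 0 < N) (hC0 : 0 < C) (hC1 : C < 1)
    (hF : 0 < F) (hd0 : 0 ≤ d) (hd1 : d < 1)
    (hpos1 : 0 < α + T * d) (hpos2 : 0 < N + α)
    (hcritα : HasDerivAt
      (fun α' : ℝ =>
        Real.log (N + α') - C * Real.log (1 - d) +
          F * Real.log ((α' + T * d + 1) / (α' + T * d))) 0 α)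
    (hcritd : HasDerivAt
      (fun d' : ℝ =>
        Real.log (N + α) - C * Real.log (1 - d') +
          F * Real.log ((α + T * d' + 1) / (α + T * d'))) 0 d) :
    α = T * (1 - d) / C - N ∧
      ((C - 1) ^ 2 * T ^ 2) * d ^ 2 +
          (((2 * T - 2 * C * N + C) * (C - 1) + F * C) * T) * d +
          ((T - C * N + C) * (T - C * N) - T * F * C) = 0 := by
  have hP : 0 < α + T * d := hpos1
  have hP1 : 0 < α + T * d + 1 := by linarith
  have h1d : 0 < 1 - d := by linarith
  -- derivative in α
  have gα : HasDerivAt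
      (fun α' : ℝ =>
        Real.log (N + α') - C * Real.log (1 - d) +
          F * (Real.log (α' + T * d + 1) - Real.log (α' + T * d)))
      (1 / (N + α) + F * (1 / (α + T * d + 1) - 1 / (α + T * d))) α := by
    have h1 : HasDerivAt (fun α' : ℝ => Real.log (N + α')) (1 / (N + α)) α := by
      have := ((hasDerivAt_id α).const_add N).log hpos2.ne'
      simpa using this
    have h2 : HasDerivAt (fun α' : ℝ => Real.log (α' + T * d + 1)) (1 / (α + T * d + 1)) α := by
      have := (((hasDerivAt_id α).add_const (T * d)).add_const 1).log hP1.ne'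
      simpa using this
    have h3 : HasDerivAt (fun α' : ℝ => Real.log (α' + T * d)) (1 / (α + T * d)) α := by
      have := ((hasDerivAt_id α).add_const (T * d)).log hP.ne'
      simpa using this
    exact (h1.sub_const (C * Real.log (1 - d))).add ((h2.sub h3).const_mul F)
  have hEqα : (fun α' : ℝ =>
        Real.log (N + α') - C * Real.log (1 - d) +
          F * Real.log ((α' + T * d + 1) / (α' + T * d)))
      =ᶠ[nhds α] (fun α' : ℝ =>
        Real.log (N + α') - C * Real.log (1 - d) +
          F * (Real.log (α' + T * d + 1) - Real.log (α' + T * d))) := by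
    have hmem : {x : ℝ | 0 < x + T * d} ∈ nhds α := by
      have : IsOpen {x : ℝ | 0 < x + T * d} :=
        isOpen_lt continuous_const (continuous_id.add continuous_const)
      exact this.mem_nhds hP
    filter_upwards [hmem] with x hx
    have hx0 : (0:ℝ) < x + T * d := hx
    have hx1 : (0:ℝ) < x + T * d + 1 := by linarith
    rw [Real.log_div hx1.ne' hx0.ne']
  have hαderiv : (1 / (N + α) + F * (1 / (α + T * d + 1) - 1 / (α + T * d))) = 0 :=
    (gα.congr_of_eventuallyEq hEqα).unique hcritα
  -- derivative in d
  have gd : HasDerivAt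
      (fun d' : ℝ =>
        Real.log (N + α) - C * Real.log (1 - d') +
          F * (Real.log (α + T * d' + 1) - Real.log (α + T * d')))
      (C / (1 - d) + F * (T / (α + T * d + 1) - T / (α + T * d))) d := by
    have h1 : HasDerivAt (fun d' : ℝ => 1 - d') (-1 : ℝ) d := by
      simpa using (hasDerivAt_id d).const_sub (1 : ℝ)
    have h1' : HasDerivAt (fun d' : ℝ => Real.log (1 - d')) (-1 / (1 - d)) d :=
      h1.log h1d.ne'
    have h2 : HasDerivAt (fun d' : ℝ => Real.log (α + T * d' + 1)) (T / (α + T * d + 1)) d := by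
      have hlin : HasDerivAt (fun d' : ℝ => α + T * d' + 1) T d := by
        simpa using (((hasDerivAt_id d).const_mul T).const_add α).add_const (1 : ℝ)
      simpa using hlin.log hP1.ne'
    have h3 : HasDerivAt (fun d' : ℝ => Real.log (α + T * d')) (T / (α + T * d)) d := by
      have hlin : HasDerivAt (fun d' : ℝ => α + T * d') T d := by
        simpa using ((hasDerivAt_id d).const_mul T).const_add α
      simpa using hlin.log hP.ne'
    have hA : HasDerivAt (fun d' : ℝ => Real.log (N + α) - C * Real.log (1 - d'))
        (-(C * (-1 / (1 - d)))) d :=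
      (h1'.const_mul C).const_sub (Real.log (N + α))
    have := hA.add ((h2.sub h3).const_mul F)
    exact this.congr_deriv (by ring)
  have hEqd : (fun d' : ℝ =>
        Real.log (N + α) - C * Real.log (1 - d') +
          F * Real.log ((α + T * d' + 1) / (α + T * d')))
      =ᶠ[nhds d] (fun d' : ℝ =>
        Real.log (N + α) - C * Real.log (1 - d') +
          F * (Real.log (α + T * d' + 1) - Real.log (α + T * d'))) := by
    have hmem : {x : ℝ | 0 < α + T * x} ∈ nhds d := by
      have : IsOpen {x : ℝ | 0 < α + T * x} :=
        isOpen_lt continuous_const (continuous_const.add (continuous_const.mul continuous_id))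
      exact this.mem_nhds hP
    filter_upwards [hmem] with x hx
    have hx0 : (0:ℝ) < α + T * x := hx
    have hx1 : (0:ℝ) < α + T * x + 1 := by linarith
    rw [Real.log_div hx1.ne' hx0.ne']
  have hdderiv : (C / (1 - d) + F * (T / (α + T * d + 1) - T / (α + T * d))) = 0 :=
    (gd.congr_of_eventuallyEq hEqd).unique hcritd
  -- algebra
  have e1 : (α + T * d) * (α + T * d + 1) = F * (N + α) := by
    have h := hαderiv
    field_simp at h
    nlinarith [h]
  have e2 : C * ((α + T * d) * (α + T * d + 1)) = T * F * (1 - d) := by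
    have h := hdderiv
    have hq1 : α + d * T ≠ 0 := by rw [mul_comm d T]; exact hP.ne'
    have hq2 : α + d * T + 1 ≠ 0 := by rw [mul_comm d T]; exact hP1.ne'
    field_simp at h
    nlinarith [h]
  have hα : α = T * (1 - d) / C - N := by
    have : C * (F * (N + α)) = T * F * (1 - d) := by rw [← e1]; exact e2
    field_simp
    nlinarith [this]
  refine ⟨hα, ?_⟩
  have hNα : N + α = T * (1 - d) / C := by rw [hα]; ring
  have hkey : C * ((α + T * d) * (α + T * d + 1)) = C * (F * (N + α)) := by rw [e1]
  have hαval : α = T * (1 - d) / C - N := hα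
  have hCne : C ≠ 0 := hC0.ne'
  -- substitute α and clear denominators
  have : ((T * (1 - d) / C - N) + T * d) * ((T * (1 - d) / C - N) + T * d + 1)
      = F * (T * (1 - d) / C) := by
    rw [← hαval, ← hNα]; exact e1
  field_simp at this
  nlinarith [this]
end

section
/- Let (p_k)_{k≥1} be positive reals with ∑_{k=1}^{∞} p_k = 1, and suppose there exists n_0 such that p_{n+1} ≤ p_n for all n ≥ n_0. Define the tail function F̄(z) = ∑_{k : k ≥ z} p_k for z > 0 (the sum over all positive integers k with k ≥ z). Let ρ > 0 and assume that for every λ > 0, F̄(λz)/F̄(z) → λ^{−ρ} as z → ∞. Define f(t) = p_{⌈t⌉} for t > 0. Then for every λ > 0, f(λt)/f(t) → λ^{−(ρ+1)} as t → ∞. -/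
open Filter

private lemma aux_keylim (c d : ℝ) (hc : 0 < c) :
    Tendsto (fun t : ℝ => t / (t * c + d)) atTop (nhds c⁻¹) := by
  have h1 : Tendsto (fun t : ℝ => (c + d * t⁻¹)⁻¹) atTop (nhds c⁻¹) := by
    have : Tendsto (fun t : ℝ => c + d * t⁻¹) atTop (nhds (c + d * 0)) :=
      tendsto_const_nhds.add (tendsto_inv_atTop_zero.const_mul d)
    rw [mul_zero, add_zero] at this
    exact this.inv₀ hc.ne'
  apply h1.congr'
  filter_upwards [eventually_gt_atTop (0:ℝ)] with t ht
  rw [show c + d * t⁻¹ = (t * c + d) / t by field_simp, inv_div]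

private lemma aux_upper_lim (ρ : ℝ) :
    Tendsto (fun b : ℝ => (b ^ ρ - 1) / (1 - b⁻¹)) (nhdsWithin 1 (Set.Ioi 1)) (nhds ρ) := by
  have hd : HasDerivAt (fun x : ℝ => x ^ ρ) (ρ * (1:ℝ) ^ (ρ - 1)) 1 :=
    Real.hasDerivAt_rpow_const (Or.inl one_ne_zero)
  rw [Real.one_rpow, mul_one] at hd
  have hs : Tendsto (slope (fun x : ℝ => x ^ ρ) 1) (nhdsWithin 1 {1}ᶜ) (nhds ρ) :=
    hasDerivAt_iff_tendsto_slope.mp hd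
  have hs' : Tendsto (slope (fun x : ℝ => x ^ ρ) 1) (nhdsWithin 1 (Set.Ioi 1)) (nhds ρ) :=
    hs.mono_left (nhdsWithin_mono 1 (fun x hx => ne_of_gt hx))
  have hb : Tendsto (fun b : ℝ => b) (nhdsWithin 1 (Set.Ioi 1)) (nhds 1) :=
    (continuous_id.tendsto 1).mono_left nhdsWithin_le_nhds
  have := hb.mul hs'
  rw [one_mul] at this
  apply this.congr'
  filter_upwards [self_mem_nhdsWithin] with b hb1
  have hb1' : (1:ℝ) < b := hb1
  rw [slope_def_field, Real.one_rpow]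
  field_simp

private lemma aux_lower_lim (ρ : ℝ) :
    Tendsto (fun b : ℝ => (1 - b ^ (-ρ)) / (b - 1)) (nhdsWithin 1 (Set.Ioi 1)) (nhds ρ) := by
  have hd : HasDerivAt (fun x : ℝ => x ^ (-ρ)) (-ρ * (1:ℝ) ^ (-ρ - 1)) 1 :=
    Real.hasDerivAt_rpow_const (Or.inl one_ne_zero)
  rw [Real.one_rpow, mul_one] at hd
  have hs : Tendsto (slope (fun x : ℝ => x ^ (-ρ)) 1) (nhdsWithin 1 {1}ᶜ) (nhds (-ρ)) :=
    hasDerivAt_iff_tendsto_slope.mp hd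
  have hs' := (hs.mono_left (nhdsWithin_mono 1 (fun x hx => ne_of_gt hx))).neg
  rw [neg_neg] at hs'
  apply hs'.congr
  intro b
  rw [slope_def_field, Real.one_rpow]
  ring

set_option maxHeartbeats 1000000 in
/-- If the tail function of an eventually monotone discrete distribution is
regularly varying with index `-ρ`, then the associated step function of the
probability mass function is regularly varying with index `-(ρ+1)`. -/
theorem pmf_regularly_varying_of_tail
    (p : ℕ → ℝ) (hp : ∀ k : ℕ, 1 ≤ k → 0 < p k)
    (hsum : HasSum (fun k : ℕ => p (k + 1)) 1)
    (hmono : ∃ n0 : ℕ, ∀ n : ℕ, n0 ≤ n → p (n + 1) ≤ p n)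
    (Fbar : ℝ → ℝ)
    (hFbar : ∀ z : ℝ, 0 < z →
      Fbar z = ∑' k : ℕ, if z ≤ ((k : ℝ) + 1) then p (k + 1) else 0)
    (ρ : ℝ) (hρ : 0 < ρ)
    (hrv : ∀ l : ℝ, 0 < l →
      Tendsto (fun z : ℝ => Fbar (l * z) / Fbar z) atTop (nhds (l ^ (-ρ))))
    (f : ℝ → ℝ) (hf : ∀ t : ℝ, 0 < t → f t = p ⌈t⌉₊) :
    ∀ l : ℝ, 0 < l →
      Tendsto (fun t : ℝ => f (l * t) / f t) atTop (nhds (l ^ (-(ρ + 1)))) := by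
  obtain ⟨n0, hmn⟩ := hmono
  -- eventual antitonicity
  have pdec : ∀ i, n0 ≤ i → ∀ j, i ≤ j → p j ≤ p i := by
    intro i hi j hij
    induction j, hij using Nat.le_induction with
    | base => exact le_rfl
    | succ j hij ih => exact (hmn j (hi.trans hij)).trans ih
  set N0 : ℕ := max n0 1 with hN0
  have hS : Summable (fun k : ℕ => p (k + 1)) := hsum.summable
  set G : ℕ → ℝ := fun n => ∑' k : ℕ, if n ≤ k + 1 then p (k + 1) else 0 with hGdef
  have hSn : ∀ n : ℕ, Summable (fun k : ℕ => if n ≤ k + 1 then p (k + 1) else 0) := by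
    intro n
    apply Summable.of_nonneg_of_le _ _ hS
    · intro k; split <;> [exact (hp (k+1) (Nat.le_add_left 1 k)).le; exact le_rfl]
    · intro k; split <;> [exact le_rfl; exact (hp (k+1) (Nat.le_add_left 1 k)).le]
  have hGpos : ∀ n : ℕ, 0 < G n := by
    intro n
    have h1 : (if n ≤ n + 1 then p (n + 1) else 0) ≤ G n := by
      apply Summable.le_tsum (hSn n) n
      intro j _; split <;> [exact (hp (j+1) (Nat.le_add_left 1 j)).le; exact le_rfl]
    rw [if_pos (Nat.le_succ n)] at h1
    exact lt_of_lt_of_le (hp (n+1) (Nat.le_add_left 1 n)) h1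
  have hstep : ∀ m : ℕ, 1 ≤ m → G m = p m + G (m + 1) := by
    intro m hm
    have h1 : G m = (if m ≤ (m-1) + 1 then p ((m-1) + 1) else 0)
        + ∑' k : ℕ, if k = m - 1 then 0 else if m ≤ k + 1 then p (k + 1) else 0 :=
      Summable.tsum_eq_add_tsum_ite (hSn m) (m - 1)
    have hm1 : m - 1 + 1 = m := Nat.succ_pred_eq_of_pos hm
    rw [hm1, if_pos le_rfl] at h1
    rw [h1]
    congr 1
    apply tsum_congr
    intro k
    by_cases hk : k = m - 1
    · rw [if_pos hk, if_neg (by omega)]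
    · rw [if_neg hk]
      by_cases h2 : m + 1 ≤ k + 1
      · rw [if_pos h2, if_pos (by omega)]
      · rw [if_neg h2, if_neg (by omega)]
  have hGsum : ∀ n : ℕ, 1 ≤ n → ∀ d : ℕ,
      G n = (∑ j ∈ Finset.Ico n (n + d), p j) + G (n + d) := by
    intro n hn d
    induction d with
    | zero => simp
    | succ d ih =>
      rw [ih, hstep (n + d) (by omega), show n + (d + 1) = (n + d) + 1 from rfl,
        Finset.sum_Ico_succ_top (by omega : n ≤ n + d)]
      ring
  -- Fbar equals G at ceilings
  have hFG : ∀ z : ℝ, 0 < z → Fbar z = G ⌈z⌉₊ := by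
    intro z hz
    rw [hFbar z hz, hGdef]
    apply tsum_congr
    intro k
    have : (z ≤ (k : ℝ) + 1) ↔ (⌈z⌉₊ ≤ k + 1) := by
      rw [Nat.ceil_le]
      push_cast
      rfl
    simp only [this]
  have hFpos : ∀ z : ℝ, 0 < z → 0 < Fbar z := fun z hz => (hFG z hz) ▸ hGpos _
  have hfpos : ∀ t : ℝ, 0 < t → 0 < f t := by
    intro t ht
    rw [hf t ht]
    exact hp _ (Nat.one_le_ceil_iff.mpr ht)
  -- the two-sided bound on tail differences
  have hbound : ∀ n m : ℕ, N0 ≤ n → n ≤ m →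
      ((m:ℝ) - n) * p m ≤ G n - G m ∧ G n - G m ≤ ((m:ℝ) - n) * p n := by
    intro n m hNn hnm
    have hn1 : 1 ≤ n := le_trans (le_max_right _ _) hNn
    have hn0 : n0 ≤ n := le_trans (le_max_left _ _) hNn
    have hsum' := hGsum n hn1 (m - n)
    rw [Nat.add_sub_cancel' hnm] at hsum'
    have hdiff : G n - G m = ∑ j ∈ Finset.Ico n m, p j := by rw [hsum']; ring
    have hcard : ((Finset.Ico n m).card : ℝ) = (m:ℝ) - n := by
      rw [Nat.card_Ico, Nat.cast_sub hnm]
    constructor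
    · have h1 : (Finset.Ico n m).card • p m ≤ ∑ j ∈ Finset.Ico n m, p j := by
        apply Finset.card_nsmul_le_sum
        intro j hj
        rw [Finset.mem_Ico] at hj
        exact pdec j (hn0.trans hj.1) m hj.2.le
      rw [nsmul_eq_mul, hcard] at h1
      rw [hdiff]; exact h1
    · have h1 : ∑ j ∈ Finset.Ico n m, p j ≤ (Finset.Ico n m).card • p n := by
        apply Finset.sum_le_card_nsmul
        intro j hj
        rw [Finset.mem_Ico] at hj
        exact pdec n hn0 j hj.1
      rw [nsmul_eq_mul, hcard] at h1
      rw [hdiff]; exact h1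
  -- the main intermediate limit : t * f t / Fbar t → ρ
  have hg : Tendsto (fun t : ℝ => t * f t / Fbar t) atTop (nhds ρ) := by
    rw [tendsto_order]
    constructor
    · -- lower bound
      intro a ha
      obtain ⟨b, hab, hb1⟩ : ∃ b : ℝ, a < (1 - b ^ (-ρ)) / (b - 1) ∧ b ∈ Set.Ioi (1:ℝ) :=
        (((aux_lower_lim ρ).eventually (eventually_gt_nhds ha)).and self_mem_nhdsWithin).exists
      have hb1' : (1:ℝ) < b := hb1
      have hb0 : (0:ℝ) < b := lt_trans one_pos hb1'
      have hc : (0:ℝ) < b - 1 := sub_pos.2 hb1'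
      have hL : Tendsto (fun t : ℝ => (1 - Fbar (b*t)/Fbar t) * (t/(t*(b-1)+1))) atTop
          (nhds ((1 - b ^ (-ρ)) * (b-1)⁻¹)) :=
        (tendsto_const_nhds.sub (hrv b hb0)).mul (aux_keylim (b-1) 1 hc)
      have hLa : ∀ᶠ t in atTop, a < (1 - Fbar (b*t)/Fbar t) * (t/(t*(b-1)+1)) := by
        apply hL.eventually (eventually_gt_nhds ?_)
        rwa [div_eq_mul_inv] at hab
      have hle : ∀ᶠ t in atTop,
          (1 - Fbar (b*t)/Fbar t) * (t/(t*(b-1)+1)) ≤ t * f t / Fbar t := by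
        filter_upwards [eventually_gt_atTop (0:ℝ), eventually_ge_atTop ((N0:ℝ))]
          with t ht0 htN
        set n := ⌈t⌉₊ with hn
        set m := ⌈b*t⌉₊ with hm
        have hbt : 0 < b * t := mul_pos hb0 ht0
        have hnm : n ≤ m := Nat.ceil_le_ceil (le_mul_of_one_le_left ht0.le hb1'.le)
        have hNn : N0 ≤ n := by
          exact_mod_cast (htN.trans (Nat.le_ceil t))
        have hn1 : 1 ≤ n := le_trans (le_max_right _ _) hNn
        have hFt : Fbar t = G n := hFG t ht0
        have hFbt : Fbar (b*t) = G m := hFG _ hbt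
        have hub := (hbound n m hNn hnm).2
        have hmlt : (m:ℝ) < b*t + 1 := Nat.ceil_lt_add_one hbt.le
        have hnt : t ≤ (n:ℝ) := Nat.le_ceil t
        have hE : ((m:ℝ) - n) ≤ t*(b-1)+1 := by
          have hcomm : b * t = t * b := mul_comm b t
          nlinarith
        have hpn : 0 < p n := hp n hn1
        have h3 : G n - G m ≤ (t*(b-1)+1) * p n :=
          le_trans hub (mul_le_mul_of_nonneg_right hE hpn.le)
        have hGn := hGpos n
        have hGm := hGpos m
        have hEpos : 0 < t*(b-1)+1 := by nlinarith
        rw [hf t ht0, hFt, hFbt]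
        have h4 : (1 - G m / G n) = (G n - G m)/G n := by field_simp
        rw [h4]
        calc (G n - G m)/G n * (t/(t*(b-1)+1))
            = (G n - G m) * t / (G n * (t*(b-1)+1)) := by
              field_simp [hGn.ne', hEpos.ne']
              try ring
          _ ≤ ((t*(b-1)+1) * p n) * t / (G n * (t*(b-1)+1)) := by
              gcongr
          _ = t * p n / G n := by
              field_simp [hGn.ne', hEpos.ne']
              try ring
      filter_upwards [hLa, hle] with t h1 h2 using lt_of_lt_of_le h1 h2
    · -- upper bound
      intro a ha
      obtain ⟨b, hab, hb1⟩ : ∃ b : ℝ, (b ^ ρ - 1) / (1 - b⁻¹) < a ∧ b ∈ Set.Ioi (1:ℝ) :=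
        (((aux_upper_lim ρ).eventually (eventually_lt_nhds ha)).and self_mem_nhdsWithin).exists
      have hb1' : (1:ℝ) < b := hb1
      have hb0 : (0:ℝ) < b := lt_trans one_pos hb1'
      have hbi0 : (0:ℝ) < b⁻¹ := inv_pos.2 hb0
      have hbi1 : b⁻¹ < 1 := inv_lt_one_of_one_lt₀ hb1'
      have hc : (0:ℝ) < 1 - b⁻¹ := sub_pos.2 hbi1
      have hval : (b⁻¹ : ℝ) ^ (-ρ) = b ^ ρ := by
        rw [Real.inv_rpow hb0.le, Real.rpow_neg hb0.le, inv_inv]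
      have hU : Tendsto (fun t : ℝ => (Fbar (b⁻¹*t)/Fbar t - 1) * (t/(t*(1-b⁻¹) + (-1))))
          atTop (nhds ((b ^ ρ - 1) * (1-b⁻¹)⁻¹)) := by
        have := ((hrv b⁻¹ hbi0).sub (tendsto_const_nhds (x := (1:ℝ)))).mul (aux_keylim (1-b⁻¹) (-1) hc)
        rwa [hval] at this
      have hUa : ∀ᶠ t in atTop, (Fbar (b⁻¹*t)/Fbar t - 1) * (t/(t*(1-b⁻¹) + (-1))) < a := by
        apply hU.eventually (eventually_lt_nhds ?_)
        rwa [div_eq_mul_inv] at hab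
      have hle : ∀ᶠ t in atTop,
          t * f t / Fbar t ≤ (Fbar (b⁻¹*t)/Fbar t - 1) * (t/(t*(1-b⁻¹) + (-1))) := by
        filter_upwards [eventually_gt_atTop (0:ℝ), eventually_ge_atTop (b*(N0:ℝ)),
          eventually_gt_atTop ((1:ℝ)/(1-b⁻¹))] with t ht0 htN htD
        set n := ⌈b⁻¹*t⌉₊ with hn
        set m := ⌈t⌉₊ with hm
        have hbt : 0 < b⁻¹ * t := mul_pos hbi0 ht0
        have hnm : n ≤ m := Nat.ceil_le_ceil (mul_le_of_le_one_left ht0.le hbi1.le)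
        have hNn : N0 ≤ n := by
          have h1 : (N0:ℝ) ≤ b⁻¹ * t := by
            rw [show (N0:ℝ) = b⁻¹ * (b * (N0:ℝ)) by field_simp]
            exact mul_le_mul_of_nonneg_left htN hbi0.le
          exact_mod_cast (h1.trans (Nat.le_ceil _))
        have hn1 : 1 ≤ n := le_trans (le_max_right _ _) hNn
        have hm1 : 1 ≤ m := le_trans hn1 hnm
        have hFn : Fbar (b⁻¹*t) = G n := hFG _ hbt
        have hFm : Fbar t = G m := hFG t ht0
        have hlb := (hbound n m hNn hnm).1
        have hmge : t ≤ (m:ℝ) := Nat.le_ceil t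
        have hnlt : (n:ℝ) < b⁻¹*t + 1 := Nat.ceil_lt_add_one hbt.le
        have hDpos : 0 < t*(1-b⁻¹) + (-1) := by
          have := (div_lt_iff₀ hc).mp htD
          linarith [mul_comm t (1-b⁻¹)]
        have hD : t*(1-b⁻¹) + (-1) ≤ (m:ℝ) - n := by
          have hcomm : b⁻¹ * t = t * b⁻¹ := mul_comm b⁻¹ t
          nlinarith
        have hpm : 0 < p m := hp m hm1
        have h3 : (t*(1-b⁻¹) + (-1)) * p m ≤ G n - G m :=
          le_trans (mul_le_mul_of_nonneg_right hD hpm.le) hlb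
        have hGn := hGpos n
        have hGm := hGpos m
        rw [hf t ht0, hFn, hFm]
        have h4 : (G n / G m - 1) = (G n - G m)/G m := by field_simp
        rw [h4]
        set D : ℝ := t*(1-b⁻¹) + (-1) with hDdef
        calc t * p m / G m
            = (D * p m) * t / (G m * D) := by
              field_simp [hGm.ne', hDpos.ne']
              try ring
          _ ≤ (G n - G m) * t / (G m * D) := by
              gcongr
          _ = (G n - G m)/G m * (t/D) := by
              field_simp [hGm.ne', hDpos.ne']
              try ring
      filter_upwards [hUa, hle] with t h1 h2 using lt_of_le_of_lt h2 h1
  -- conclusion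
  intro l hl
  have hlt : Tendsto (fun t : ℝ => l * t) atTop atTop :=
    Tendsto.const_mul_atTop hl tendsto_id
  have hgl : Tendsto (fun t : ℝ => (l*t) * f (l*t) / Fbar (l*t)) atTop (nhds ρ) :=
    hg.comp hlt
  have hratio : Tendsto (fun t : ℝ =>
      ((l*t) * f (l*t) / Fbar (l*t)) / (t * f t / Fbar t)) atTop (nhds 1) := by
    have := hgl.div hg hρ.ne'
    rwa [div_self hρ.ne'] at this
  have hmain : Tendsto (fun t : ℝ =>
      (((l*t) * f (l*t) / Fbar (l*t)) / (t * f t / Fbar t)) * (Fbar (l*t)/Fbar t) * l⁻¹)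
      atTop (nhds (1 * l ^ (-ρ) * l⁻¹)) :=
    ((hratio.mul (hrv l hl)).mul_const _)
  have hvala : 1 * l ^ (-ρ) * l⁻¹ = l ^ (-(ρ+1)) := by
    rw [one_mul, ← Real.rpow_neg_one l, ← Real.rpow_add hl]
    ring_nf
  rw [hvala] at hmain
  apply hmain.congr'
  filter_upwards [eventually_gt_atTop (0:ℝ)] with t ht0
  have hlt0 : 0 < l * t := mul_pos hl ht0
  have hft := hfpos t ht0
  have hflt := hfpos _ hlt0
  have hFt := hFpos t ht0
  have hFlt := hFpos _ hlt0
  field_simp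
end

section
/- Let (p_k)_{k≥1} be positive reals with ∑_{k=1}^{∞} p_k = 1, and suppose there exists n_0 such that p_{n+1} ≤ p_n for all n ≥ n_0. Let ρ > 1, define f(t) = p_{⌈t⌉} for t > 0, and assume that for every λ > 0, f(λt)/f(t) → λ^{−ρ} as t → ∞. Then the series ∑_{k=1}^{∞} p_k·log p_k converges absolutely; equivalently, the Shannon entropy H = −∑_{k=1}^{∞} p_k log p_k is finite. -/
open Filter

set_option maxHeartbeats 1600000 in
/-- If the step function of an eventually monotone probability mass function is
regularly varying with index `-ρ` for some `ρ > 1`, then the Shannon entropy is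
finite, i.e. `k ↦ p_k log p_k` is summable. -/
theorem entropy_summable_of_regularly_varying
    (p : ℕ → ℝ) (hp : ∀ k : ℕ, 1 ≤ k → 0 < p k)
    (hsum : HasSum (fun k : ℕ => p (k + 1)) 1)
    (hmono : ∃ n0 : ℕ, ∀ n : ℕ, n0 ≤ n → p (n + 1) ≤ p n)
    (ρ : ℝ) (hρ : 1 < ρ)
    (f : ℝ → ℝ) (hf : ∀ t : ℝ, 0 < t → f t = p ⌈t⌉₊)
    (hrv : ∀ l : ℝ, 0 < l →
      Tendsto (fun t : ℝ => f (l * t) / f t) atTop (nhds (l ^ (-ρ)))) :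
    Summable (fun k : ℕ => p (k + 1) * Real.log (p (k + 1))) := by
  obtain ⟨n0, hm⟩ := hmono
  -- eventual antitonicity
  have anti : ∀ a b : ℕ, n0 ≤ a → a ≤ b → p b ≤ p a := by
    intro a b ha hab
    induction b, hab using Nat.le_induction with
    | base => exact le_rfl
    | succ b hb ih => exact (hm b (ha.trans hb)).trans ih
  -- the doubling limit at natural arguments
  have T0 : Tendsto (fun n : ℕ => f (2 * (n : ℝ)) / f (n : ℝ)) atTop
      (nhds ((2 : ℝ) ^ (-ρ))) :=
    (hrv 2 two_pos).comp tendsto_natCast_atTop_atTop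
  have T : Tendsto (fun n : ℕ => p (2 * n) / p n) atTop (nhds ((2 : ℝ) ^ (-ρ))) := by
    refine T0.congr' ?_
    filter_upwards [eventually_ge_atTop 1] with n hn
    have h1 : (0 : ℝ) < (n : ℝ) := by exact_mod_cast Nat.pos_of_ne_zero (by omega)
    have h2 : (0 : ℝ) < 2 * (n : ℝ) := by linarith
    rw [hf _ h1, hf _ h2]
    have e1 : (2 * (n : ℝ)) = ((2 * n : ℕ) : ℝ) := by push_cast; ring
    rw [e1, Nat.ceil_natCast, Nat.ceil_natCast]
  set s : ℝ := (1 + ρ) / 2 with hs_def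
  set r : ℝ := ρ + 1 with hr_def
  have hs1 : 1 < s := by rw [hs_def]; linarith
  have hsρ : s < ρ := by rw [hs_def]; linarith
  have hrρ : ρ < r := by rw [hr_def]; linarith
  have hr0 : 0 < r := by linarith
  have hb2 : (1 : ℝ) < 2 := one_lt_two
  have hlt1 : (2 : ℝ) ^ (-ρ) < 2 ^ (-s) :=
    (Real.rpow_lt_rpow_left_iff hb2).mpr (by linarith)
  have hlt2 : (2 : ℝ) ^ (-r) < 2 ^ (-ρ) :=
    (Real.rpow_lt_rpow_left_iff hb2).mpr (by linarith)
  have e1 : ∀ᶠ n : ℕ in atTop, p (2 * n) / p n < 2 ^ (-s) := T.eventually_lt_const hlt1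
  have e2 : ∀ᶠ n : ℕ in atTop, (2 : ℝ) ^ (-r) < p (2 * n) / p n := T.eventually_const_lt hlt2
  obtain ⟨N1, hN1⟩ := ((e1.and e2).and (eventually_ge_atTop (max n0 1))).exists_forall_of_atTop
  set N : ℕ := max N1 (max n0 1) with hN_def
  have hN1le : N1 ≤ N := le_max_left _ _
  have hn0N : n0 ≤ N := le_trans (le_max_left _ _) (le_max_right _ _)
  have hN1' : 1 ≤ N := le_trans (le_max_right _ _) (le_max_right _ _)
  have hNpos : 0 < N := hN1'
  have hpN : 0 < p N := hp N hN1'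
  -- doubling inequalities for n ≥ N
  have dbl_up : ∀ n : ℕ, N ≤ n → p (2 * n) ≤ (2 : ℝ) ^ (-s) * p n := by
    intro n hn
    have hpn := hp n (le_trans hN1' hn)
    have h := ((hN1 n (le_trans hN1le hn)).1).1
    calc p (2 * n) = p (2 * n) / p n * p n := by field_simp
    _ ≤ (2 : ℝ) ^ (-s) * p n := mul_le_mul_of_nonneg_right h.le hpn.le
  have dbl_lo : ∀ n : ℕ, N ≤ n → (2 : ℝ) ^ (-r) * p n ≤ p (2 * n) := by
    intro n hn
    have hpn := hp n (le_trans hN1' hn)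
    have h := ((hN1 n (le_trans hN1le hn)).1).2
    calc (2 : ℝ) ^ (-r) * p n ≤ p (2 * n) / p n * p n :=
        mul_le_mul_of_nonneg_right h.le hpn.le
    _ = p (2 * n) := by field_simp
  have hNle : ∀ j : ℕ, N ≤ 2 ^ j * N := fun j =>
    Nat.le_mul_of_pos_left N (by positivity)
  -- bounds along the dyadic sequence
  have split : ∀ (j : ℕ) (z : ℝ), ((2 ^ (j + 1) : ℕ) : ℝ) ^ z
      = (2 : ℝ) ^ z * ((2 ^ j : ℕ) : ℝ) ^ z := by
    intro j z
    push_cast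
    rw [show ((2 : ℝ) ^ (j + 1)) = 2 * (2 : ℝ) ^ j by ring,
      Real.mul_rpow (by norm_num) (by positivity)]
  have up : ∀ j : ℕ, p (2 ^ j * N) ≤ ((2 ^ j : ℕ) : ℝ) ^ (-s) * p N := by
    intro j
    induction j with
    | zero => simp
    | succ j ih =>
      have h1 : (2 : ℕ) ^ (j + 1) * N = 2 * (2 ^ j * N) := by ring
      have h2 := dbl_up (2 ^ j * N) (hNle j)
      rw [h1, split j (-s), mul_assoc]
      exact h2.trans (mul_le_mul_of_nonneg_left ih (by positivity))
  have lo : ∀ j : ℕ, ((2 ^ j : ℕ) : ℝ) ^ (-r) * p N ≤ p (2 ^ j * N) := by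
    intro j
    induction j with
    | zero => simp
    | succ j ih =>
      have h1 : (2 : ℕ) ^ (j + 1) * N = 2 * (2 ^ j * N) := by ring
      have h2 := dbl_lo (2 ^ j * N) (hNle j)
      rw [h1, split j (-r), mul_assoc]
      exact (mul_le_mul_of_nonneg_left ih (by positivity)).trans h2
  -- power bounds for all n ≥ N
  set C : ℝ := ((2 * N : ℕ) : ℝ) ^ s * p N with hC_def
  set B : ℝ := (2 : ℝ) ^ (-r) * p N with hB_def
  have hCpos : 0 < C := by
    apply mul_pos _ hpN
    apply Real.rpow_pos_of_pos
    exact_mod_cast Nat.mul_pos (by norm_num) hNpos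
  have hBpos : 0 < B := mul_pos (Real.rpow_pos_of_pos (by norm_num) _) hpN
  have key : ∀ n : ℕ, N ≤ n →
      p n ≤ C * (n : ℝ) ^ (-s) ∧ B * (n : ℝ) ^ (-r) ≤ p n := by
    intro n hn
    have hn1 : 1 ≤ n := le_trans hN1' hn
    have hnR : (0 : ℝ) < (n : ℝ) := by exact_mod_cast Nat.pos_of_ne_zero (by omega)
    set j : ℕ := Nat.log 2 (n / N) with hj_def
    have hdiv : 0 < n / N := Nat.div_pos hn hNpos
    have hj1 : 2 ^ j * N ≤ n := by
      have := Nat.pow_log_le_self 2 hdiv.ne'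
      exact (Nat.le_div_iff_mul_le hNpos).mp this
    have hj2 : n < 2 ^ (j + 1) * N := by
      have := Nat.lt_pow_succ_log_self (by norm_num : 1 < 2) (n / N)
      exact (Nat.div_lt_iff_lt_mul hNpos).mp this
    have h2jpos : (0 : ℝ) < ((2 ^ j : ℕ) : ℝ) := by positivity
    constructor
    · -- upper bound
      have hb1 : p n ≤ p (2 ^ j * N) := anti _ _ (hn0N.trans (hNle j)) hj1
      have hb2 := up j
      -- (2^j)^(-s) ≤ (2N)^s * n^(-s)
      have hx : (n : ℝ) / ((2 * N : ℕ) : ℝ) ≤ ((2 ^ j : ℕ) : ℝ) := by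
        rw [div_le_iff₀ (by exact_mod_cast Nat.mul_pos (by norm_num) hNpos)]
        have : (n : ℝ) < ((2 ^ (j + 1) * N : ℕ) : ℝ) := by exact_mod_cast hj2
        calc (n : ℝ) ≤ ((2 ^ (j + 1) * N : ℕ) : ℝ) := this.le
        _ = ((2 ^ j : ℕ) : ℝ) * ((2 * N : ℕ) : ℝ) := by push_cast; ring
      have hxpos : (0 : ℝ) < (n : ℝ) / ((2 * N : ℕ) : ℝ) := by
        apply div_pos hnR
        exact_mod_cast Nat.mul_pos (by norm_num) hNpos
      have hb3 : ((2 ^ j : ℕ) : ℝ) ^ (-s) ≤ ((n : ℝ) / ((2 * N : ℕ) : ℝ)) ^ (-s) :=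
        Real.rpow_le_rpow_of_nonpos hxpos hx (by linarith)
      have hb4 : ((n : ℝ) / ((2 * N : ℕ) : ℝ)) ^ (-s)
          = ((2 * N : ℕ) : ℝ) ^ s * (n : ℝ) ^ (-s) := by
        rw [Real.div_rpow hnR.le (by positivity), Real.rpow_neg hnR.le,
          Real.rpow_neg (by positivity : (0:ℝ) ≤ ((2 * N : ℕ) : ℝ))]
        field_simp
      calc p n ≤ ((2 ^ j : ℕ) : ℝ) ^ (-s) * p N := hb1.trans hb2
      _ ≤ ((2 * N : ℕ) : ℝ) ^ s * (n : ℝ) ^ (-s) * p N := by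
          rw [← hb4]; exact mul_le_mul_of_nonneg_right hb3 hpN.le
      _ = C * (n : ℝ) ^ (-s) := by rw [hC_def]; ring
    · -- lower bound
      have hb1 : p (2 ^ (j + 1) * N) ≤ p n := anti _ _ (hn0N.trans hn) hj2.le
      have hb2 := lo (j + 1)
      have hx : ((2 ^ (j + 1) : ℕ) : ℝ) ≤ 2 * (n : ℝ) := by
        have h2j : 2 ^ j ≤ n := le_trans (Nat.le_mul_of_pos_right _ hNpos) hj1
        have h2 : (2 : ℕ) ^ (j + 1) ≤ 2 * n := by
          calc (2 : ℕ) ^ (j + 1) = 2 * 2 ^ j := by ring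
          _ ≤ 2 * n := Nat.mul_le_mul_left 2 h2j
        exact_mod_cast h2
      have hb3 : (2 * (n : ℝ)) ^ (-r) ≤ ((2 ^ (j + 1) : ℕ) : ℝ) ^ (-r) :=
        Real.rpow_le_rpow_of_nonpos (by positivity) hx (by linarith)
      have hb4 : (2 * (n : ℝ)) ^ (-r) = (2 : ℝ) ^ (-r) * (n : ℝ) ^ (-r) :=
        Real.mul_rpow (by norm_num) hnR.le
      calc B * (n : ℝ) ^ (-r) = (2 * (n : ℝ)) ^ (-r) * p N := by
            rw [hB_def, hb4]; ring
      _ ≤ ((2 ^ (j + 1) : ℕ) : ℝ) ^ (-r) * p N := mul_le_mul_of_nonneg_right hb3 hpN.le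
      _ ≤ p (2 ^ (j + 1) * N) := hb2
      _ ≤ p n := hb1
  -- p tends to zero
  have ptend : Tendsto p atTop (nhds 0) :=
    (tendsto_add_atTop_iff_nat 1).mp hsum.summable.tendsto_atTop_zero
  have plt1 : ∀ᶠ n : ℕ in atTop, p n < 1 := ptend.eventually_lt_const one_pos
  -- growth comparison
  set ε : ℝ := (s - 1) / 2 with hε_def
  have hε : 0 < ε := by rw [hε_def]; linarith
  set s' : ℝ := s - ε with hs'_def
  have hs'1 : 1 < s' := by rw [hs'_def, hε_def]; linarith
  have hs's : s' < s := by rw [hs'_def]; linarith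
  have hgrow : ∀ᶠ x : ℝ in atTop,
      C * (Real.log (1 / B) + r * Real.log x) ≤ x ^ ε := by
    have hlog : Real.log =o[atTop] fun x : ℝ => x ^ ε := isLittleO_log_rpow_atTop hε
    have hconst : (fun _ : ℝ => Real.log (1 / B)) =o[atTop] fun x : ℝ => x ^ ε := by
      rw [Asymptotics.isLittleO_const_left]
      right
      have h1 : Tendsto (fun x : ℝ => x ^ ε) atTop atTop := tendsto_rpow_atTop hε
      exact tendsto_abs_atTop_atTop.comp h1
    have h2 : (fun x : ℝ => C * (Real.log (1 / B) + r * Real.log x))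
        =o[atTop] fun x : ℝ => x ^ ε :=
      (hconst.add (hlog.const_mul_left r)).const_mul_left C
    filter_upwards [h2.bound one_pos, eventually_ge_atTop (0 : ℝ)] with x hx hx0
    calc C * (Real.log (1 / B) + r * Real.log x)
        ≤ ‖C * (Real.log (1 / B) + r * Real.log x)‖ := le_abs_self _
    _ ≤ 1 * ‖x ^ ε‖ := hx
    _ = x ^ ε := by rw [one_mul, Real.norm_eq_abs, abs_of_nonneg (Real.rpow_nonneg hx0 ε)]
  have hgrowN : ∀ᶠ n : ℕ in atTop,
      C * (Real.log (1 / B) + r * Real.log (n : ℝ)) ≤ (n : ℝ) ^ ε :=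
    tendsto_natCast_atTop_atTop.eventually hgrow
  -- main eventual bound
  have main : ∀ᶠ n : ℕ in atTop, |p n * Real.log (p n)| ≤ (n : ℝ) ^ (-s') := by
    filter_upwards [eventually_ge_atTop N, plt1, hgrowN] with n hn h1 hg
    have hn1 : 1 ≤ n := le_trans hN1' hn
    have hnR : (0 : ℝ) < (n : ℝ) := by exact_mod_cast Nat.pos_of_ne_zero (by omega)
    have hpn := hp n hn1
    obtain ⟨hup, hlo⟩ := key n hn
    have hlogneg : Real.log (p n) < 0 := Real.log_neg hpn h1
    have habs : |p n * Real.log (p n)| = p n * (-Real.log (p n)) := by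
      rw [abs_mul, abs_of_pos hpn, abs_of_neg hlogneg]
    have hBn : 0 < B * (n : ℝ) ^ (-r) := mul_pos hBpos (Real.rpow_pos_of_pos hnR _)
    have hinv : (p n)⁻¹ ≤ (B * (n : ℝ) ^ (-r))⁻¹ := by
      exact inv_anti₀ hBn hlo
    have hval : (B * (n : ℝ) ^ (-r))⁻¹ = (1 / B) * (n : ℝ) ^ r := by
      rw [Real.rpow_neg hnR.le]
      field_simp
    have hloginv : -Real.log (p n) ≤ Real.log (1 / B) + r * Real.log (n : ℝ) := by
      rw [← Real.log_inv]
      calc Real.log (p n)⁻¹ ≤ Real.log (B * (n : ℝ) ^ (-r))⁻¹ :=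
            Real.log_le_log (by positivity) hinv
      _ = Real.log (1 / B) + r * Real.log (n : ℝ) := by
          rw [hval, Real.log_mul (by positivity) (by positivity), Real.log_rpow hnR]
    have hlogpos : 0 ≤ Real.log (1 / B) + r * Real.log (n : ℝ) :=
      le_trans (by linarith) hloginv
    rw [habs]
    calc p n * (-Real.log (p n))
        ≤ (C * (n : ℝ) ^ (-s)) * (Real.log (1 / B) + r * Real.log (n : ℝ)) := by
          apply mul_le_mul hup hloginv (by linarith) (by positivity)
    _ = (n : ℝ) ^ (-s) * (C * (Real.log (1 / B) + r * Real.log (n : ℝ))) := by ring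
    _ ≤ (n : ℝ) ^ (-s) * (n : ℝ) ^ ε := by
          apply mul_le_mul_of_nonneg_left hg (by positivity)
    _ = (n : ℝ) ^ (-s') := by
          rw [← Real.rpow_add hnR, hs'_def]; ring_nf
  -- conclude summability
  have Sg : Summable (fun n : ℕ => (n : ℝ) ^ (-s')) :=
    Real.summable_nat_rpow.mpr (by linarith)
  have hO : (fun n : ℕ => p n * Real.log (p n)) =O[atTop] fun n : ℕ => (n : ℝ) ^ (-s') := by
    apply Asymptotics.IsBigO.of_bound 1
    filter_upwards [main, eventually_ge_atTop 1] with n hn hn1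
    have hnR : (0 : ℝ) < (n : ℝ) := by exact_mod_cast Nat.pos_of_ne_zero (by omega)
    rw [one_mul, Real.norm_eq_abs, Real.norm_eq_abs,
      abs_of_nonneg (Real.rpow_nonneg hnR.le _)]
    exact hn
  have : Summable (fun n : ℕ => p n * Real.log (p n)) := summable_of_isBigO_nat Sg hO
  exact (summable_nat_add_iff 1).mpr this
end

section
/- Let (p_k)_{k≥1} be positive reals with ∑_{k=1}^{∞} p_k = 1, and suppose there exists n_0 such that p_{n+1} ≤ p_n for all n ≥ n_0. Define f(t) = p_{⌈t⌉} for t > 0, and assume that for every λ > 0, f(λt)/f(t) → λ^{−1} as t → ∞ (regular variation with index −1). Then the series ∑_{k=1}^{∞} p_k·log p_k is summable if and only if the series ∑_{k=1}^{∞} p_k·log k is summable. -/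
open Filter Real Topology Asymptotics

private lemma aux_log_ratio (p : ℕ → ℝ) (hp : ∀ k : ℕ, 1 ≤ k → 0 < p k)
    (hsum : HasSum (fun k : ℕ => p (k + 1)) 1)
    (hmono : ∃ n0 : ℕ, ∀ n : ℕ, n0 ≤ n → p (n + 1) ≤ p n)
    (f : ℝ → ℝ) (hf : ∀ t : ℝ, 0 < t → f t = p ⌈t⌉₊)
    (hrv : ∀ l : ℝ, 0 < l →
      Tendsto (fun t : ℝ => f (l * t) / f t) atTop (nhds (l ^ (-(1 : ℝ))))) :
    Tendsto (fun k : ℕ => Real.log (p k) / Real.log k) atTop (𝓝 (-1)) := by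
  obtain ⟨n0, hm⟩ := hmono
  have hanti : ∀ a b : ℕ, n0 ≤ a → a ≤ b → p b ≤ p a := by
    intro a b ha hab
    obtain ⟨c, rfl⟩ := Nat.exists_eq_add_of_le hab
    clear hab
    induction c with
    | zero => exact le_rfl
    | succ c ih => exact le_trans (hm (a + c) (by omega)) ih
  have hpow : ∀ j : ℕ, (0:ℝ) < 2 ^ j := fun j => by positivity
  have hppow : ∀ j : ℕ, 0 < p (2 ^ j) := fun j => hp _ (Nat.one_le_two_pow)
  -- Step 1: ratio along powers of 2
  have h2 : Tendsto (fun j : ℕ => p (2 ^ (j + 1)) / p (2 ^ j)) atTop (𝓝 (2⁻¹)) := by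
    have hT : Tendsto (fun j : ℕ => (2:ℝ) ^ j) atTop atTop :=
      tendsto_pow_atTop_atTop_of_one_lt (by norm_num)
    have := (hrv 2 two_pos).comp hT
    rw [Real.rpow_neg_one] at this
    refine this.congr fun j => ?_
    have e1 : f ((2:ℝ) ^ j) = p (2 ^ j) := by
      rw [hf _ (hpow j)]
      congr 1
      rw [show ((2:ℝ) ^ j) = ((2 ^ j : ℕ) : ℝ) by push_cast; ring, Nat.ceil_natCast]
    have e2 : f (2 * (2:ℝ) ^ j) = p (2 ^ (j + 1)) := by
      rw [hf _ (by positivity)]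
      congr 1
      rw [show (2 * (2:ℝ) ^ j) = ((2 ^ (j+1) : ℕ) : ℝ) by push_cast; ring, Nat.ceil_natCast]
    simp only [Function.comp_apply, e1, e2]
  -- Step 2: log differences
  have hlogd : Tendsto (fun j : ℕ => Real.log (p (2 ^ (j + 1))) - Real.log (p (2 ^ j)))
      atTop (𝓝 (-Real.log 2)) := by
    have hc : Tendsto (fun j : ℕ => Real.log (p (2 ^ (j + 1)) / p (2 ^ j))) atTop
        (𝓝 (Real.log 2⁻¹)) :=
      ((Real.continuousAt_log (by norm_num)).tendsto.comp h2)
    rw [Real.log_inv] at hc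
    refine hc.congr fun j => ?_
    rw [Real.log_div (ne_of_gt (hppow _)) (ne_of_gt (hppow _))]
  -- Step 3: Cesàro + telescoping
  have hA : Tendsto (fun n : ℕ => Real.log (p (2 ^ n)) / n) atTop (𝓝 (-Real.log 2)) := by
    have hc := hlogd.cesaro
    have hc2 : Tendsto (fun n : ℕ => (↑n)⁻¹ * (Real.log (p (2 ^ n)) - Real.log (p 1)))
        atTop (𝓝 (-Real.log 2)) := by
      refine hc.congr fun n => ?_
      rw [Finset.sum_range_sub (fun i => Real.log (p (2 ^ i)))]
      norm_num
    have hz : Tendsto (fun n : ℕ => Real.log (p 1) / n) atTop (𝓝 0) :=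
      tendsto_const_div_atTop_nhds_zero_nat _
    have := hc2.add hz
    rw [add_zero] at this
    refine this.congr fun n => ?_
    field_simp
    ring
  -- limits of the two squeeze bounds (as functions of m)
  have hlog2pos : (0:ℝ) < Real.log 2 := Real.log_pos (by norm_num)
  have hU' : Tendsto (fun n : ℕ => Real.log (p (2 ^ n)) / (((n:ℝ) + 1) * Real.log 2))
      atTop (𝓝 (-1)) := by
    have h1 : Tendsto (fun n : ℕ => (Real.log (p (2 ^ n)) / n) * ((n:ℝ) / (((n:ℝ)+1) * Real.log 2)))
        atTop (𝓝 ((-Real.log 2) * ((Real.log 2)⁻¹))) := by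
      refine hA.mul ?_
      have h2' : Tendsto (fun n : ℕ => ((n:ℝ)/((n:ℝ)+1)) * (Real.log 2)⁻¹) atTop
          (𝓝 (1 * (Real.log 2)⁻¹)) := (tendsto_natCast_div_add_atTop (1:ℝ)).mul tendsto_const_nhds
      rw [one_mul] at h2'
      refine h2'.congr fun n => ?_
      rw [← div_eq_mul_inv, div_div]
    rw [neg_mul, mul_inv_cancel₀ (ne_of_gt hlog2pos)] at h1
    refine h1.congr' ?_
    filter_upwards [eventually_ge_atTop 1] with n hn
    have hn0 : (n:ℝ) ≠ 0 := Nat.cast_ne_zero.2 (by omega)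
    field_simp
  have hLo' : Tendsto (fun n : ℕ => Real.log (p (2 ^ (n + 1))) / ((n:ℝ) * Real.log 2))
      atTop (𝓝 (-1)) := by
    have hAs : Tendsto (fun n : ℕ => Real.log (p (2 ^ (n + 1))) / ((n:ℝ) + 1)) atTop
        (𝓝 (-Real.log 2)) := by
      have := hA.comp (tendsto_add_atTop_nat 1)
      refine this.congr fun n => ?_
      simp [Function.comp]
    have hrat : Tendsto (fun n : ℕ => (((n:ℝ)+1)/(n:ℝ)) * (Real.log 2)⁻¹) atTop
        (𝓝 (1 * (Real.log 2)⁻¹)) := by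
      refine Tendsto.mul ?_ tendsto_const_nhds
      have : Tendsto (fun n : ℕ => 1 + ((n:ℝ))⁻¹) atTop (𝓝 (1 + 0)) :=
        tendsto_const_nhds.add tendsto_inv_atTop_nhds_zero_nat
      rw [add_zero] at this
      refine this.congr' ?_
      filter_upwards [eventually_ge_atTop 1] with n hn
      have hn0 : (n:ℝ) ≠ 0 := Nat.cast_ne_zero.2 (by omega)
      field_simp
    rw [one_mul] at hrat
    have h1 := hAs.mul hrat
    rw [neg_mul, mul_inv_cancel₀ (ne_of_gt hlog2pos)] at h1
    refine h1.congr' ?_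
    filter_upwards [eventually_ge_atTop 1] with n hn
    have hn0 : (n:ℝ) ≠ 0 := Nat.cast_ne_zero.2 (by omega)
    have hn1 : ((n:ℝ) + 1) ≠ 0 := by positivity
    field_simp
  -- Nat.log 2 tends to atTop
  have hmT : Tendsto (fun k : ℕ => Nat.log 2 k) atTop atTop := by
    refine tendsto_atTop_atTop.2 fun b => ⟨2 ^ b, fun k hk => ?_⟩
    have : k ≠ 0 := by have := Nat.one_le_two_pow (n := b); omega
    exact (Nat.le_log_iff_pow_le one_lt_two this).2 hk
  have hU := hU'.comp hmT
  have hLo := hLo'.comp hmT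
  -- p tends to 0, get eventual bound p n < 1
  have hpt : Tendsto p atTop (𝓝 0) := by
    have hs : Summable fun k : ℕ => p (k + 1) := hsum.summable
    have : Summable p := (summable_nat_add_iff 1).1 hs
    exact this.tendsto_atTop_zero
  obtain ⟨N, hN⟩ := (hpt.eventually_lt_const (by norm_num : (0:ℝ) < 1)).exists_forall_of_atTop
  -- squeeze
  have key : ∀ᶠ k : ℕ in atTop,
      Real.log (p (2 ^ (Nat.log 2 k + 1))) / ((Nat.log 2 k : ℝ) * Real.log 2)
        ≤ Real.log (p k) / Real.log k ∧
      Real.log (p k) / Real.log k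
        ≤ Real.log (p (2 ^ Nat.log 2 k)) / (((Nat.log 2 k : ℝ) + 1) * Real.log 2) := by
    filter_upwards [eventually_ge_atTop (max (2 * n0 + 2) (max (2 ^ N) 2))] with k hk
    have hk1 : 2 * n0 + 2 ≤ k := le_trans (le_max_left _ _) hk
    have hk2 : 2 ^ N ≤ k := le_trans (le_trans (le_max_left _ _) (le_max_right _ _)) hk
    have hk3 : 2 ≤ k := le_trans (le_trans (le_max_right _ _) (le_max_right _ _)) hk
    have hk0 : k ≠ 0 := by omega
    set m := Nat.log 2 k with hmdef
    have hm1 : 1 ≤ m := (Nat.le_log_iff_pow_le one_lt_two hk0).2 (by simpa using hk3)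
    have hmN : N ≤ m := (Nat.le_log_iff_pow_le one_lt_two hk0).2 hk2
    have h2mk : 2 ^ m ≤ k := Nat.pow_log_le_self 2 hk0
    have hk2m : k < 2 ^ (m + 1) := Nat.lt_pow_succ_log_self one_lt_two k
    have hn0m : n0 ≤ 2 ^ m := by
      have : k < 2 * 2 ^ m := by rw [← pow_succ']; exact hk2m
      omega
    have hpk : 0 < p k := hp k (by omega)
    have hup : p k ≤ p (2 ^ m) := hanti _ _ hn0m h2mk
    have hlow : p (2 ^ (m + 1)) ≤ p k := hanti _ _ (by omega) (le_of_lt hk2m)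
    have hNm : N < 2 ^ m := lt_of_lt_of_le (Nat.lt_two_pow_self (n := N)) (Nat.pow_le_pow_right (by norm_num) hmN)
    have hA0 : Real.log (p (2 ^ m)) ≤ 0 :=
      Real.log_nonpos (le_of_lt (hppow m)) (le_of_lt (hN _ (by omega)))
    have hB0 : Real.log (p (2 ^ (m + 1))) ≤ 0 := Real.log_nonpos (le_of_lt (hppow _))
      (le_of_lt (hN _ (by have := Nat.pow_le_pow_right (by norm_num : 1 ≤ 2) (Nat.le_succ m); omega)))
    have hcast : ((2:ℝ) ^ m) ≤ (k:ℝ) := by exact_mod_cast h2mk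
    have hcast2 : (k:ℝ) ≤ (2:ℝ) ^ (m + 1) := by exact_mod_cast le_of_lt hk2m
    have hDlow : (m:ℝ) * Real.log 2 ≤ Real.log k := by
      have := Real.log_le_log (by positivity) hcast
      rwa [Real.log_pow] at this
    have hDhigh : Real.log k ≤ ((m:ℝ) + 1) * Real.log 2 := by
      have := Real.log_le_log (by exact_mod_cast Nat.pos_of_ne_zero hk0) hcast2
      rwa [Real.log_pow, Nat.cast_add, Nat.cast_one] at this
    have hDpos : 0 < Real.log k := Real.log_pos (by exact_mod_cast hk3)
    have hmLpos : 0 < (m:ℝ) * Real.log 2 := by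
      have : (0:ℝ) < m := by exact_mod_cast hm1
      positivity
    have hlogup : Real.log (p k) ≤ Real.log (p (2 ^ m)) := Real.log_le_log hpk hup
    have hloglow : Real.log (p (2 ^ (m + 1))) ≤ Real.log (p k) := Real.log_le_log (hppow _) hlow
    constructor
    · have s1 : Real.log (p (2 ^ (m + 1))) / ((m:ℝ) * Real.log 2)
          ≤ Real.log (p (2 ^ (m + 1))) / Real.log k := by
        have := div_le_div_of_nonneg_left (neg_nonneg.2 hB0) hmLpos hDlow
        rw [neg_div, neg_div] at this
        linarith
      have s2 : Real.log (p (2 ^ (m + 1))) / Real.log k ≤ Real.log (p k) / Real.log k :=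
        by gcongr
      exact le_trans s1 s2
    · have s2 : Real.log (p k) / Real.log k ≤ Real.log (p (2 ^ m)) / Real.log k :=
        by gcongr
      have s1 : Real.log (p (2 ^ m)) / Real.log k
          ≤ Real.log (p (2 ^ m)) / (((m:ℝ) + 1) * Real.log 2) := by
        have := div_le_div_of_nonneg_left (neg_nonneg.2 hA0) hDpos hDhigh
        rw [neg_div, neg_div] at this
        linarith
      exact le_trans s2 s1
  exact tendsto_of_tendsto_of_tendsto_of_le_of_le' hLo hU
    (key.mono fun k h => h.1) (key.mono fun k h => h.2)



/-- For an eventually monotone probability mass function whose step function is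
regularly varying with index `-1`, the entropy series `∑ p_k log p_k` is
summable iff `∑ p_k log k` is summable. -/
theorem entropy_summable_iff_of_regularly_varying_index_one
    (p : ℕ → ℝ) (hp : ∀ k : ℕ, 1 ≤ k → 0 < p k)
    (hsum : HasSum (fun k : ℕ => p (k + 1)) 1)
    (hmono : ∃ n0 : ℕ, ∀ n : ℕ, n0 ≤ n → p (n + 1) ≤ p n)
    (f : ℝ → ℝ) (hf : ∀ t : ℝ, 0 < t → f t = p ⌈t⌉₊)
    (hrv : ∀ l : ℝ, 0 < l →
      Tendsto (fun t : ℝ => f (l * t) / f t) atTop (nhds (l ^ (-(1 : ℝ))))) :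
    Summable (fun k : ℕ => p (k + 1) * Real.log (p (k + 1))) ↔
      Summable (fun k : ℕ => p (k + 1) * Real.log ((k : ℝ) + 1)) := by
  have hclim := aux_log_ratio p hp hsum hmono f hf hrv
  set a : ℕ → ℝ := fun k => p (k + 1) * Real.log (p (k + 1)) with ha
  set b : ℕ → ℝ := fun k => p (k + 1) * Real.log ((k : ℝ) + 1) with hb
  have hppos : ∀ k : ℕ, 0 < p (k + 1) := fun k => hp _ (by omega)
  have hc1 : Tendsto (fun k : ℕ => a k / b k) atTop (𝓝 (-1)) := by
    have := hclim.comp (tendsto_add_atTop_nat 1)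
    refine this.congr fun k => ?_
    simp only [Function.comp_apply, ha, hb]
    rw [mul_div_mul_left _ _ (ne_of_gt (hppos k))]
    push_cast
    ring_nf
  -- eventual nonvanishing
  have hpt : Tendsto (fun k : ℕ => p (k + 1)) atTop (𝓝 0) := hsum.summable.tendsto_atTop_zero
  have hane : ∀ᶠ k : ℕ in atTop, a k ≠ 0 := by
    filter_upwards [hpt.eventually_lt_const (by norm_num : (0:ℝ) < 1)] with k hk
    have := hppos k
    have hlog : Real.log (p (k + 1)) < 0 := Real.log_neg this hk
    simp only [ha]
    exact mul_ne_zero (ne_of_gt this) (ne_of_lt hlog)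
  have hbne : ∀ᶠ k : ℕ in atTop, b k ≠ 0 := by
    filter_upwards [eventually_ge_atTop 1] with k hk
    have hlog : 0 < Real.log ((k:ℝ) + 1) := Real.log_pos (by exact_mod_cast by omega)
    simp only [hb]
    exact mul_ne_zero (ne_of_gt (hppos k)) (ne_of_gt hlog)
  have hab : a =O[atTop] b :=
    isBigO_of_div_tendsto_nhds (hbne.mono fun k hk h => absurd h hk) (-1) hc1
  have hc2 : Tendsto (fun k : ℕ => b k / a k) atTop (𝓝 (-1)) := by
    have := hc1.inv₀ (by norm_num : (-1:ℝ) ≠ 0)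
    norm_num at this
    exact this
  have hba : b =O[atTop] a :=
    isBigO_of_div_tendsto_nhds (hane.mono fun k hk h => absurd h hk) (-1) hc2
  constructor
  · intro h
    exact summable_of_isBigO_nat h hba
  · intro h
    exact summable_of_isBigO_nat h hab
end

section
/- Let d ∈ (0,1) and α > 0, and define f(t) = ((1−d)/α)·(Γ(α/d + ⌈t⌉)/Γ(α/d))·(Γ((α+1)/d)/Γ((α+1)/d + ⌈t⌉)) for t > 0, where Γ is the real Gamma function. Then for every λ > 0, f(λt)/f(t) → λ^{−1/d} as t → ∞; that is, f is regularly varying with index −1/d. -/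
open Filter Finset Topology

lemma gamma_prod (s : ℝ) (hs : 0 < s) (n : ℕ) :
    Real.Gamma (s + n) = Real.Gamma s * ∏ j ∈ Finset.range n, (s + j) := by
  induction n with
  | zero => simp
  | succ n ih =>
    have h : s + ((n + 1 : ℕ) : ℝ) = (s + n) + 1 := by push_cast; ring
    have hne : s + (n : ℝ) ≠ 0 := by positivity
    rw [h, Real.Gamma_add_one hne, ih, Finset.prod_range_succ]; ring

lemma gamma_ratio_tendsto {a b : ℝ} (ha : 0 < a) (hb : 0 < b) :
    Tendsto (fun n : ℕ => (n : ℝ) ^ (b - a) * Real.Gamma (a + n) / Real.Gamma (b + n))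
      atTop (𝓝 1) := by
  have hGa := (Real.Gamma_pos_of_pos ha)
  have hGb := (Real.Gamma_pos_of_pos hb)
  have step1 : Tendsto (fun n : ℕ => Real.GammaSeq b n / Real.GammaSeq a n *
      (Real.Gamma a / Real.Gamma b)) atTop (𝓝 1) := by
    have := ((Real.GammaSeq_tendsto_Gamma b).div (Real.GammaSeq_tendsto_Gamma a)
      hGa.ne').mul_const (Real.Gamma a / Real.Gamma b)
    convert this using 2
    · rfl
    · rw [div_mul_div_comm, mul_comm (Real.Gamma b), div_self (mul_pos hGa hGb).ne']
  have key : ∀ n : ℕ, 1 ≤ n → Real.GammaSeq b n / Real.GammaSeq a n *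
      (Real.Gamma a / Real.Gamma b) =
      (n : ℝ) ^ (b - a) * Real.Gamma (a + ((n + 1 : ℕ) : ℝ)) / Real.Gamma (b + ((n + 1 : ℕ) : ℝ)) := by
    intro n hn
    have hn0 : (0 : ℝ) < n := by exact_mod_cast hn
    have hPa : (0:ℝ) < ∏ j ∈ Finset.range (n+1), (a + j) :=
      Finset.prod_pos fun j _ => by positivity
    have hPb : (0:ℝ) < ∏ j ∈ Finset.range (n+1), (b + j) :=
      Finset.prod_pos fun j _ => by positivity
    have hfac : (0:ℝ) < (n.factorial : ℝ) := by exact_mod_cast n.factorial_pos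
    have hra : (0:ℝ) < (n:ℝ) ^ a := Real.rpow_pos_of_pos hn0 a
    have hrb : (0:ℝ) < (n:ℝ) ^ b := Real.rpow_pos_of_pos hn0 b
    rw [Real.GammaSeq, Real.GammaSeq, gamma_prod a ha, gamma_prod b hb, Real.rpow_sub hn0]
    field_simp
  have step3 : Tendsto (fun n : ℕ => (n : ℝ) ^ (b - a) *
      Real.Gamma (a + ((n + 1 : ℕ) : ℝ)) / Real.Gamma (b + ((n + 1 : ℕ) : ℝ))) atTop (𝓝 1) := by
    refine step1.congr' ?_
    filter_upwards [eventually_ge_atTop 1] with n hn using key n hn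
  have step4 : Tendsto (fun n : ℕ => ((n:ℝ)+1) ^ (b-a) / (n:ℝ) ^ (b-a)) atTop (𝓝 1) := by
    have h1 : Tendsto (fun n : ℕ => ((n:ℝ)+1)/n) atTop (𝓝 1) := by
      have : Tendsto (fun n : ℕ => 1 + ((n:ℝ))⁻¹) atTop (𝓝 (1 + 0)) :=
        tendsto_const_nhds.add (tendsto_inv_atTop_zero.comp tendsto_natCast_atTop_atTop)
      rw [add_zero] at this
      refine this.congr' ?_
      filter_upwards [eventually_ge_atTop 1] with n hn
      have : (n:ℝ) ≠ 0 := by positivity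
      field_simp
    have hc : ContinuousAt (fun x : ℝ => x ^ (b-a)) 1 :=
      Real.continuousAt_rpow_const 1 (b-a) (Or.inl one_ne_zero)
    have := (hc.tendsto.comp h1)
    rw [Real.one_rpow] at this
    refine this.congr' ?_
    filter_upwards [eventually_ge_atTop 1] with n hn
    have hn0 : (0:ℝ) ≤ (n:ℝ) := by positivity
    simp only [Function.comp]
    rw [Real.div_rpow (by positivity) hn0]
  have step5 : Tendsto (fun n : ℕ => ((n+1 : ℕ) : ℝ) ^ (b - a) *
      Real.Gamma (a + ((n + 1 : ℕ) : ℝ)) / Real.Gamma (b + ((n + 1 : ℕ) : ℝ))) atTop (𝓝 1) := by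
    have := step3.mul step4
    rw [mul_one] at this
    refine this.congr' ?_
    filter_upwards [eventually_ge_atTop 1] with n hn
    have hn0 : (0 : ℝ) < n := by exact_mod_cast hn
    have hra : ((n:ℝ)) ^ (b-a) ≠ 0 := (Real.rpow_pos_of_pos hn0 _).ne'
    have hGB : Real.Gamma (b + ((n + 1 : ℕ) : ℝ)) ≠ 0 :=
      (Real.Gamma_pos_of_pos (by positivity)).ne'
    push_cast
    field_simp
  exact (tendsto_add_atTop_iff_nat 1).mp step5

/-- The step function of the marginal Pitman–Yor probability mass function with
discount parameter `d ∈ (0,1)` is regularly varying with index `-1/d`. -/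
theorem mpy_step_function_regularly_varying
    (d α : ℝ) (hd0 : 0 < d) (hd1 : d < 1) (hα : 0 < α)
    (f : ℝ → ℝ)
    (hf : ∀ t : ℝ, 0 < t →
      f t = ((1 - d) / α) * (Real.Gamma (α / d + ⌈t⌉₊) / Real.Gamma (α / d)) *
        (Real.Gamma ((α + 1) / d) / Real.Gamma ((α + 1) / d + ⌈t⌉₊))) :
    ∀ l : ℝ, 0 < l →
      Tendsto (fun t : ℝ => f (l * t) / f t) atTop (nhds (l ^ (-1 / d))) := by
  intro l hl
  set a := α / d with ha_def
  set b := (α + 1) / d with hb_def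
  have ha : 0 < a := div_pos hα hd0
  have hb : 0 < b := div_pos (by linarith) hd0
  have hba : b - a = 1 / d := by rw [hb_def, ha_def, div_sub_div_same]; norm_num
  set G : ℕ → ℝ := fun n => (n : ℝ) ^ (b - a) * Real.Gamma (a + n) / Real.Gamma (b + n)
    with hG_def
  have hG : Tendsto G atTop (𝓝 1) := gamma_ratio_tendsto ha hb
  -- limits of the ceiling ratios
  have hceil1 : Tendsto (fun t : ℝ => (⌈t⌉₊ : ℝ) / t) atTop (𝓝 1) := tendsto_nat_ceil_div_atTop
  have hceil2 : Tendsto (fun t : ℝ => (⌈l * t⌉₊ : ℝ) / t) atTop (𝓝 l) :=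
    tendsto_nat_ceil_mul_div_atTop hl.le
  have hq : Tendsto (fun t : ℝ => ((⌈t⌉₊ : ℝ) / t) / ((⌈l * t⌉₊ : ℝ) / t)) atTop (𝓝 (1 / l)) :=
    hceil1.div hceil2 hl.ne'
  have hrq : Tendsto (fun t : ℝ => (((⌈t⌉₊ : ℝ) / t) / ((⌈l * t⌉₊ : ℝ) / t)) ^ (b - a))
      atTop (𝓝 ((1 / l) ^ (b - a))) := by
    have hc : ContinuousAt (fun x : ℝ => x ^ (b - a)) (1 / l) :=
      Real.continuousAt_rpow_const _ _ (Or.inl (by positivity))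
    exact hc.tendsto.comp hq
  -- composed G limits
  have hmt : Tendsto (fun t : ℝ => ⌈l * t⌉₊) atTop atTop :=
    tendsto_nat_ceil_atTop.comp (Tendsto.const_mul_atTop hl tendsto_id)
  have hnt : Tendsto (fun t : ℝ => ⌈t⌉₊) atTop atTop := tendsto_nat_ceil_atTop
  have hGm : Tendsto (fun t : ℝ => G ⌈l * t⌉₊) atTop (𝓝 1) := hG.comp hmt
  have hGn : Tendsto (fun t : ℝ => G ⌈t⌉₊) atTop (𝓝 1) := hG.comp hnt
  have hmain : Tendsto (fun t : ℝ => (G ⌈l * t⌉₊ / G ⌈t⌉₊) *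
      (((⌈t⌉₊ : ℝ) / t) / ((⌈l * t⌉₊ : ℝ) / t)) ^ (b - a)) atTop
      (𝓝 ((1 / 1) * (1 / l) ^ (b - a))) :=
    ((hGm.div hGn one_ne_zero).mul hrq)
  have hval : (1 / 1 : ℝ) * (1 / l) ^ (b - a) = l ^ (-1 / d) := by
    have h2 : ((1 : ℝ) / l) ^ ((1 : ℝ) / d) = l ^ (-1 / d) := by
      rw [one_div l, Real.inv_rpow hl.le, ← Real.rpow_neg hl.le, neg_div]
    rw [hba, h2]; ring
  rw [hval] at hmain
  refine hmain.congr' ?_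
  filter_upwards [eventually_ge_atTop (max 1 (1 / l))] with t ht
  have ht1 : (1 : ℝ) ≤ t := le_trans (le_max_left _ _) ht
  have ht0 : 0 < t := lt_of_lt_of_le one_pos ht1
  have htl : (1 : ℝ) ≤ l * t := by
    have h1l : 1 / l ≤ t := le_trans (le_max_right _ _) ht
    calc (1 : ℝ) = l * (1 / l) := by field_simp
    _ ≤ l * t := by nlinarith
  have hlt0 : 0 < l * t := lt_of_lt_of_le one_pos htl
  set n := ⌈t⌉₊ with hn_def
  set m := ⌈l * t⌉₊ with hm_def
  have hn1 : 1 ≤ n := Nat.one_le_ceil_iff.mpr ht0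
  have hm1 : 1 ≤ m := Nat.one_le_ceil_iff.mpr hlt0
  have hn0 : (0 : ℝ) < n := by exact_mod_cast hn1
  have hm0 : (0 : ℝ) < m := by exact_mod_cast hm1
  have hquot : ((n : ℝ) / t) / ((m : ℝ) / t) = (n : ℝ) / m := by
    field_simp
  rw [hquot, hf t ht0, hf (l * t) hlt0, ← hn_def, ← hm_def, hG_def]
  have hGan : 0 < Real.Gamma (a + n) := Real.Gamma_pos_of_pos (by positivity)
  have hGbn : 0 < Real.Gamma (b + n) := Real.Gamma_pos_of_pos (by positivity)
  have hGam : 0 < Real.Gamma (a + m) := Real.Gamma_pos_of_pos (by positivity)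
  have hGbm : 0 < Real.Gamma (b + m) := Real.Gamma_pos_of_pos (by positivity)
  have hGa : 0 < Real.Gamma a := Real.Gamma_pos_of_pos ha
  have hGb : 0 < Real.Gamma b := Real.Gamma_pos_of_pos hb
  set C := (1 - d) / α with hC_def
  have hC : (0 : ℝ) < C := div_pos (by linarith) hα
  have hrn : (0 : ℝ) < (n : ℝ) ^ (b - a) := Real.rpow_pos_of_pos hn0 _
  have hrm : (0 : ℝ) < (m : ℝ) ^ (b - a) := Real.rpow_pos_of_pos hm0 _
  rw [Real.div_rpow hn0.le hm0.le]
  field_simp [hC.ne', hGa.ne', hGb.ne', hGan.ne', hGbn.ne', hGam.ne', hGbm.ne',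
    hrn.ne', hrm.ne']
end

section
/- Let d ∈ [0,1) and α > 0, and define p_k = ((1−d)/α)·∏_{j=1}^{k} (α+(j−1)d)/(α+(j−1)d+1) for k = 1,2,…. Then the sequence k ↦ p_k·log p_k is summable; that is, the Shannon entropy −∑_{k=1}^{∞} p_k log p_k of the marginal Pitman–Yor process is finite. -/
open Real Finset

private lemma mpy_log_factor (x c : ℝ) (hx : 0 < x) (hc : 0 < c) :
    Real.log (x / (x + c)) ≤ c * (Real.log x - Real.log (x + 1)) + c^2 * (1 / x^2) := by
  have hxc : 0 < x + c := by linarith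
  have hx1 : 0 < x + 1 := by linarith
  have h1 : Real.log (x + 1) - Real.log x ≤ 1 / x := by
    rw [← Real.log_div hx1.ne' hx.ne']
    have h := Real.log_le_sub_one_of_pos (show (0:ℝ) < (x+1)/x by positivity)
    have e : (x+1)/x - 1 = 1/x := by field_simp; ring
    linarith
  have h2 : c / (x + c) ≤ Real.log (x + c) - Real.log x := by
    rw [← Real.log_div hxc.ne' hx.ne']
    have h := Real.one_sub_inv_le_log_of_pos (show (0:ℝ) < (x+c)/x by positivity)
    have e : 1 - ((x+c)/x)⁻¹ = c/(x+c) := by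
      rw [inv_div]
      field_simp
      ring
    linarith
  have h3 : c / x - c / (x + c) ≤ c^2 * (1 / x^2) := by
    have e : c / x - c / (x + c) = c^2 / (x * (x + c)) := by
      field_simp
      ring
    have e2 : c^2 * (1 / x^2) = c^2 / (x^2) := by ring
    rw [e, e2]
    gcongr
    nlinarith
  have h4 : Real.log (x / (x + c)) = Real.log x - Real.log (x + c) :=
    Real.log_div hx.ne' hxc.ne'
  have h5 : c * (Real.log (x+1) - Real.log x) ≤ c * (1/x) :=
    mul_le_mul_of_nonneg_left h1 hc.le
  rw [mul_one_div] at h5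
  rw [h4]
  nlinarith [h2, h5, h3]

private lemma mpy_sq_sum (a : ℝ) (ha : 0 < a) (k : ℕ) :
    ∑ j ∈ range k, 1 / (a + (j:ℝ))^2 ≤ 1/a^2 + 1/a := by
  have key : ∀ n : ℕ, 1 ≤ n →
      ∑ j ∈ range n, 1/(a+(j:ℝ))^2 ≤ 1/a^2 + 1/a - 1/(a+(n:ℝ)-1) := by
    intro n hn
    induction n, hn using Nat.le_induction with
    | base =>
      rw [Finset.sum_range_one]
      push_cast
      norm_num
    | succ m hm ih =>
      rw [Finset.sum_range_succ]
      have hm1 : (1:ℝ) ≤ (m:ℝ) := by exact_mod_cast hm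
      have h1 : (0:ℝ) < a + (m:ℝ) - 1 := by linarith
      have h2 : (0:ℝ) < a + (m:ℝ) := by linarith
      have h3 : 1/(a+(m:ℝ))^2 ≤ 1/(a+(m:ℝ)-1) - 1/(a+(m:ℝ)) := by
        have e : 1/(a+(m:ℝ)-1) - 1/(a+(m:ℝ)) = 1/((a+(m:ℝ)-1)*(a+(m:ℝ))) := by
          field_simp
          ring
        rw [e]
        apply one_div_le_one_div_of_le (mul_pos h1 h2)
        nlinarith
      have e2 : a + ((m:ℝ)+1) - 1 = a + (m:ℝ) := by ring
      push_cast
      rw [e2]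
      linarith
  cases k with
  | zero =>
    simp
    positivity
  | succ m =>
    have h := key (m+1) (by omega)
    have h1 : (0:ℝ) < a + ((m+1:ℕ):ℝ) - 1 := by
      have : (0:ℝ) ≤ ((m:ℕ):ℝ) := Nat.cast_nonneg m
      push_cast
      linarith
    have h2 : (0:ℝ) < 1/(a + ((m+1:ℕ):ℝ) - 1) := by positivity
    linarith

set_option maxHeartbeats 1000000 in
/-- The Shannon entropy of the marginal Pitman–Yor process is finite: the
sequence `k ↦ p_k log p_k` is summable. -/
theorem mpy_entropy_finite (d α : ℝ) (hd0 : 0 ≤ d) (hd1 : d < 1) (hα : 0 < α)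
    (p : ℕ → ℝ)
    (hp : ∀ k : ℕ, 1 ≤ k →
      p k = ((1 - d) / α) *
        ∏ j ∈ Finset.range k, (α + (j : ℝ) * d) / (α + (j : ℝ) * d + 1)) :
    Summable (fun k : ℕ => p (k + 1) * Real.log (p (k + 1))) := by
  set e := max d (1/2 : ℝ) with he_def
  have he0 : (0:ℝ) < e := lt_of_lt_of_le (by norm_num) (le_max_right _ _)
  have he1 : e < 1 := max_lt hd1 (by norm_num)
  have hde : d ≤ e := le_max_left _ _
  have hd1' : (0:ℝ) < 1 - d := by linarith
  have hpd : ∀ y : ℝ, 0 ≤ y → 0 < α + y * d :=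
    fun y hy => add_pos_of_pos_of_nonneg hα (mul_nonneg hy hd0)
  have hpe : ∀ y : ℝ, 0 ≤ y → 0 < α + y * e :=
    fun y hy => add_pos_of_pos_of_nonneg hα (mul_nonneg hy he0.le)
  set c := 1 / e with hc_def
  set a := α / e with ha_def
  have ha0 : 0 < a := by positivity
  have hc1 : 1 ≤ c := by rw [hc_def, le_div_iff₀ he0]; linarith
  have hc0 : 0 < c := lt_of_lt_of_le one_pos hc1
  set s := (1 - e) / 2 with hs_def
  have hs0 : 0 < s := by rw [hs_def]; linarith
  have hs1 : s < 1 := by rw [hs_def]; linarith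
  set t := c * (1 - s) with ht_def
  have ht1 : 1 < t := by
    have het : t = (1 + e) / (2 * e) := by
      rw [ht_def, hc_def, hs_def]; field_simp; ring
    rw [het, lt_div_iff₀ (by positivity)]; linarith
  set B := c^2 * (1/a^2 + 1/a) with hB_def
  set C := ((1 - d) / α) * (Real.exp B * a ^ c) with hC_def
  have hC0 : 0 < C := by
    apply mul_pos (div_pos hd1' hα)
    exact mul_pos (Real.exp_pos B) (Real.rpow_pos_of_pos ha0 c)
  -- positivity of p
  have hppos : ∀ k : ℕ, 1 ≤ k → 0 < p k := by
    intro k hk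
    rw [hp k hk]
    apply mul_pos (div_pos hd1' hα)
    apply Finset.prod_pos
    intro j _
    have h1 := hpd (j:ℝ) (Nat.cast_nonneg j)
    exact div_pos h1 (by linarith)
  -- p k ≤ 1
  have hple1 : ∀ k : ℕ, 1 ≤ k → p k ≤ 1 := by
    intro k hk
    cases k with
    | zero => omega
    | succ m =>
      rw [hp _ hk, Finset.prod_range_succ']
      have h0 : (α + ((0:ℕ):ℝ) * d) / (α + ((0:ℕ):ℝ) * d + 1) = α / (α + 1) := by
        norm_num
      rw [h0]
      have hprod : (∏ j ∈ range m,
          (α + ((j + 1 : ℕ):ℝ) * d) / (α + ((j + 1 : ℕ):ℝ) * d + 1)) ≤ 1 := by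
        apply Finset.prod_le_one
        · intro j _
          have h1 := hpd ((j + 1 : ℕ):ℝ) (Nat.cast_nonneg _)
          exact (div_pos h1 (by linarith)).le
        · intro j _
          have h1 := hpd ((j + 1 : ℕ):ℝ) (Nat.cast_nonneg _)
          rw [div_le_one (by linarith)]
          linarith
      calc (1 - d) / α * ((∏ j ∈ range m,
              (α + ((j + 1 : ℕ):ℝ) * d) / (α + ((j + 1 : ℕ):ℝ) * d + 1)) * (α / (α + 1)))
          ≤ (1 - d) / α * (1 * (α / (α + 1))) := by
            apply mul_le_mul_of_nonneg_left _ (div_pos hd1' hα).le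
            apply mul_le_mul_of_nonneg_right hprod (by positivity)
        _ = (1 - d) / (α + 1) := by field_simp
        _ ≤ 1 := by rw [div_le_one (by positivity)]; linarith
  -- key upper bound
  have hbound : ∀ k : ℕ, 1 ≤ k → p k ≤ C * (k:ℝ) ^ (-c) := by
    intro k hk
    have hk0 : (0:ℝ) < k := by exact_mod_cast hk
    rw [hp k hk]
    have hGpos : ∀ j : ℕ, 0 < (a + (j:ℝ)) / (a + (j:ℝ) + c) := by
      intro j
      have : (0:ℝ) < a + (j:ℝ) := by positivity
      apply div_pos this (by linarith)
    have step1 : ∏ j ∈ range k, (α + (j:ℝ) * d) / (α + (j:ℝ) * d + 1)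
        ≤ ∏ j ∈ range k, (α + (j:ℝ) * e) / (α + (j:ℝ) * e + 1) := by
      apply Finset.prod_le_prod
      · intro j _
        have h1 := hpd (j:ℝ) (Nat.cast_nonneg j)
        exact (div_pos h1 (by linarith)).le
      · intro j _
        have h1 := hpd (j:ℝ) (Nat.cast_nonneg j)
        have h2 := hpe (j:ℝ) (Nat.cast_nonneg j)
        rw [div_le_div_iff₀ (by linarith) (by linarith)]
        have h3 : (j:ℝ) * d ≤ (j:ℝ) * e :=
          mul_le_mul_of_nonneg_left hde (Nat.cast_nonneg j)
        nlinarith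
    have step2 : ∀ j : ℕ, (α + (j:ℝ) * e) / (α + (j:ℝ) * e + 1)
        = (a + (j:ℝ)) / (a + (j:ℝ) + c) := by
      intro j
      rw [ha_def, hc_def]
      have h2 := hpe (j:ℝ) (Nat.cast_nonneg j)
      rw [div_eq_div_iff (by linarith) (by positivity)]
      field_simp
    have hppos' : (0:ℝ) < ∏ j ∈ range k, (a + (j:ℝ)) / (a + (j:ℝ) + c) :=
      Finset.prod_pos (fun j _ => hGpos j)
    have hak : (0:ℝ) < a + (k:ℝ) := by positivity
    -- log bound
    have hle : Real.log (∏ j ∈ range k, (a + (j:ℝ)) / (a + (j:ℝ) + c))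
        ≤ c * (Real.log a - Real.log (a + (k:ℝ))) + B := by
      rw [Real.log_prod (fun j _ => (hGpos j).ne')]
      have hsum1 : ∑ j ∈ range k, Real.log ((a+(j:ℝ))/(a+(j:ℝ)+c))
          ≤ ∑ j ∈ range k, (c * (Real.log (a+(j:ℝ)) - Real.log (a+(j:ℝ)+1))
              + c^2 * (1 / (a+(j:ℝ))^2)) := by
        apply Finset.sum_le_sum
        intro j _
        exact mpy_log_factor (a+(j:ℝ)) c (by positivity) hc0
      have htel : ∑ j ∈ range k, (Real.log (a+(j:ℝ)) - Real.log (a+(j:ℝ)+1))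
          = Real.log a - Real.log (a + (k:ℝ)) := by
        have h := Finset.sum_range_sub' (fun i : ℕ => Real.log (a + (i:ℝ))) k
        simp only [Nat.cast_add, Nat.cast_one, Nat.cast_zero, add_zero] at h
        rw [← h]
        apply Finset.sum_congr rfl
        intro j _
        push_cast
        ring_nf
      have hsq := mpy_sq_sum a ha0 k
      calc ∑ j ∈ range k, Real.log ((a+(j:ℝ))/(a+(j:ℝ)+c))
          ≤ ∑ j ∈ range k, (c * (Real.log (a+(j:ℝ)) - Real.log (a+(j:ℝ)+1))
              + c^2 * (1 / (a+(j:ℝ))^2)) := hsum1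
        _ = c * (∑ j ∈ range k, (Real.log (a+(j:ℝ)) - Real.log (a+(j:ℝ)+1)))
            + c^2 * (∑ j ∈ range k, 1 / (a+(j:ℝ))^2) := by
            rw [Finset.sum_add_distrib, Finset.mul_sum, Finset.mul_sum]
        _ ≤ c * (Real.log a - Real.log (a + (k:ℝ))) + B := by
            rw [htel, hB_def]
            have := mul_le_mul_of_nonneg_left hsq (sq_nonneg c)
            nlinarith [sq_nonneg c]
    have step3 : ∏ j ∈ range k, (a + (j:ℝ)) / (a + (j:ℝ) + c)
        ≤ Real.exp B * (a / (a + (k:ℝ))) ^ c := by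
      calc ∏ j ∈ range k, (a + (j:ℝ)) / (a + (j:ℝ) + c)
          = Real.exp (Real.log (∏ j ∈ range k, (a + (j:ℝ)) / (a + (j:ℝ) + c))) :=
            (Real.exp_log hppos').symm
        _ ≤ Real.exp (c * (Real.log a - Real.log (a + (k:ℝ))) + B) :=
            Real.exp_le_exp.mpr hle
        _ = Real.exp B * (a / (a + (k:ℝ))) ^ c := by
            rw [Real.rpow_def_of_pos (div_pos ha0 hak), Real.log_div ha0.ne' hak.ne',
              Real.exp_add, mul_comm c (Real.log a - Real.log (a + (k:ℝ)))]
            ring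
    have step4 : (a / (a + (k:ℝ))) ^ c ≤ a ^ c * (k:ℝ) ^ (-c) := by
      have h1 : a / (a + (k:ℝ)) ≤ a / (k:ℝ) := by
        apply div_le_div_of_nonneg_left ha0.le hk0
        linarith
      calc (a / (a + (k:ℝ))) ^ c ≤ (a / (k:ℝ)) ^ c :=
            Real.rpow_le_rpow (by positivity) h1 hc0.le
        _ = a ^ c / (k:ℝ) ^ c := Real.div_rpow ha0.le (Nat.cast_nonneg k) c
        _ = a ^ c * (k:ℝ) ^ (-c) := by
            rw [Real.rpow_neg (Nat.cast_nonneg k)]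
            ring
    calc ((1 - d) / α) * ∏ j ∈ range k, (α + (j:ℝ) * d) / (α + (j:ℝ) * d + 1)
        ≤ ((1 - d) / α) * (Real.exp B * (a / (a + (k:ℝ))) ^ c) := by
          apply mul_le_mul_of_nonneg_left _ (div_pos hd1' hα).le
          refine le_trans step1 ?_
          rw [Finset.prod_congr rfl (fun j _ => step2 j)]
          exact step3
      _ ≤ ((1 - d) / α) * (Real.exp B * (a ^ c * (k:ℝ) ^ (-c))) := by
          apply mul_le_mul_of_nonneg_left _ (div_pos hd1' hα).le
          exact mul_le_mul_of_nonneg_left step4 (Real.exp_pos B).le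
      _ = C * (k:ℝ) ^ (-c) := by rw [hC_def]; ring
  -- summable majorant
  have hg : Summable (fun k : ℕ => (1/s) * C ^ (1-s) * (1 / (((k+1:ℕ)):ℝ) ^ t)) := by
    apply Summable.mul_left
    have hsum := (Real.summable_one_div_nat_rpow (p := t)).mpr ht1
    exact (summable_nat_add_iff 1).mpr hsum
  apply Summable.of_abs
  apply Summable.of_nonneg_of_le (fun k => abs_nonneg _) _ hg
  intro k
  have hK1 : 1 ≤ k + 1 := Nat.le_add_left 1 k
  have hpK := hppos (k+1) hK1
  have hpK1 := hple1 (k+1) hK1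
  have hKc : (0:ℝ) < ((k+1:ℕ):ℝ) := by exact_mod_cast hK1
  have hlog : Real.log (p (k+1)) ≤ 0 := Real.log_nonpos hpK.le hpK1
  have habs : |p (k+1) * Real.log (p (k+1))| = -(p (k+1) * Real.log (p (k+1))) :=
    abs_of_nonpos (mul_nonpos_of_nonneg_of_nonpos hpK.le hlog)
  rw [habs]
  have hneg : -(p (k+1) * Real.log (p (k+1))) ≤ (1/s) * (p (k+1)) ^ (1-s) := by
    have h1 : Real.log ((p (k+1))⁻¹ ^ s) ≤ (p (k+1))⁻¹ ^ s - 1 :=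
      Real.log_le_sub_one_of_pos (Real.rpow_pos_of_pos (inv_pos.mpr hpK) s)
    rw [Real.log_rpow (inv_pos.mpr hpK)] at h1
    have h3 : s * Real.log (p (k+1))⁻¹ ≤ (p (k+1))⁻¹ ^ s := by
      nlinarith [Real.rpow_pos_of_pos (inv_pos.mpr hpK) s]
    have h2 : Real.log (p (k+1))⁻¹ ≤ ((p (k+1))⁻¹ ^ s) / s := by
      rw [div_eq_inv_mul]
      calc Real.log (p (k+1))⁻¹ = s⁻¹ * (s * Real.log (p (k+1))⁻¹) := by field_simp
        _ ≤ s⁻¹ * ((p (k+1))⁻¹ ^ s) :=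
            mul_le_mul_of_nonneg_left h3 (inv_nonneg.mpr hs0.le)
    have e1 : -(p (k+1) * Real.log (p (k+1))) = p (k+1) * Real.log (p (k+1))⁻¹ := by
      rw [Real.log_inv]; ring
    have e2 : p (k+1) * ((p (k+1))⁻¹ ^ s / s) = (1 / s) * (p (k+1)) ^ (1 - s) := by
      rw [Real.inv_rpow hpK.le, ← Real.rpow_neg hpK.le,
        show (1:ℝ) - s = 1 + (-s) by ring, Real.rpow_add hpK, Real.rpow_one]
      ring
    rw [e1, ← e2]
    exact mul_le_mul_of_nonneg_left h2 hpK.le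
  calc -(p (k+1) * Real.log (p (k+1))) ≤ (1/s) * (p (k+1)) ^ (1-s) := hneg
    _ ≤ (1/s) * (C * ((k+1:ℕ):ℝ) ^ (-c)) ^ (1-s) := by
        apply mul_le_mul_of_nonneg_left _ (one_div_pos.mpr hs0).le
        exact Real.rpow_le_rpow hpK.le (hbound (k+1) hK1) (by linarith)
    _ = (1/s) * C ^ (1-s) * (1 / ((k+1:ℕ):ℝ) ^ t) := by
        rw [Real.mul_rpow hC0.le (Real.rpow_nonneg hKc.le _),
          ← Real.rpow_mul hKc.le,
          show -c * (1-s) = -t by rw [ht_def]; ring,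
          Real.rpow_neg hKc.le, one_div]
        ring
end
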